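/- arXiv:cs/0507025 — 10 statements merged into one kernel-verified Lean document; each statement's English description precedes it below -/
import Mathlib

section
/- Let m, n be positive integers, ξ_1,…,ξ_m points of a measurable space X, f : X → ℝ, and ω_1,…,ω_m nonnegative real weights with Σ_{i=1}^m ω_i = 1. Set R = Σ_{i=1}^m ⌊n ω_i⌋ and assume R < n, and define the residual weights ω̄_i = (n ω_i − ⌊n ω_i⌋)/(n − R). Let Ī^1,…,Ī^{n−R} be i.i.d. random indices with P(Ī^k = i) = ω̄_i. Then the residual resampling estimator is unbiased: E[ Σ_{i=1}^m (⌊n ω_i⌋/n) f(ξ_i) + (1/n) Σ_{k=1}^{n−R} f(ξ_{Ī^k}) ] = Σ_{i=1}^m ω_i f(ξ_i). -/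
open MeasureTheory ProbabilityTheory Filter Finset

/-- unbiasedness of residual resampling.
With `R = ∑_i ⌊n w i⌋ < n`, residual weights `w̄ i = (n w i − ⌊n w i⌋)/(n − R)` and
i.i.d. residual indices `Ī k` with `P(Ī k = i) = w̄ i`, the residual resampling estimator
has expectation `∑_i w i f(ξ i)`. -/
theorem residual_resampling_unbiased
    {X : Type*} [MeasurableSpace X] {Ω : Type*} [MeasurableSpace Ω]
    (P : Measure Ω) [IsProbabilityMeasure P]
    (m n : ℕ) (hm : 0 < m) (hn : 0 < n)
    (ξ : Fin m → X) (f : X → ℝ)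
    (w : Fin m → ℝ) (hw : ∀ i, 0 ≤ w i) (hw1 : ∑ i, w i = 1)
    (R : ℕ) (hR : (R : ℤ) = ∑ i, ⌊(n : ℝ) * w i⌋) (hRn : R < n)
    (wbar : Fin m → ℝ)
    (hwbar : ∀ i, wbar i = ((n : ℝ) * w i - ⌊(n : ℝ) * w i⌋) / ((n : ℝ) - R))
    (Ibar : Fin (n - R) → Ω → Fin m) (hImeas : ∀ k, Measurable (Ibar k))
    (hIindep : iIndepFun Ibar P)
    (hIlaw : ∀ k i, P {a | Ibar k a = i} = ENNReal.ofReal (wbar i)) :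
    ∫ a, ((∑ i, ((⌊(n : ℝ) * w i⌋ : ℝ) / (n : ℝ)) * f (ξ i))
        + (1 / (n : ℝ)) * ∑ k, f (ξ (Ibar k a))) ∂P
      = ∑ i, w i * f (ξ i) := by
  have hnR : (0:ℝ) < (n:ℝ) - R := by
    have h : (R:ℝ) < n := by exact_mod_cast hRn
    linarith
  have hwbar0 : ∀ i, 0 ≤ wbar i := by
    intro i
    rw [hwbar i]
    exact div_nonneg (by linarith [Int.floor_le ((n:ℝ) * w i)]) hnR.le
  -- decompose f (ξ (Ibar k a))
  have hdecomp : ∀ k a, f (ξ (Ibar k a)) =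
      ∑ i, Set.indicator {a | Ibar k a = i} (fun _ => f (ξ i)) a := by
    intro k a
    simp [Set.indicator_apply, Set.mem_setOf_eq]
  have hmeasset : ∀ k (i : Fin m), MeasurableSet {a | Ibar k a = i} := fun k i =>
    (hImeas k) (measurableSet_singleton i)
  have hint1 : ∀ k (i : Fin m),
      Integrable (Set.indicator {a | Ibar k a = i} (fun _ => f (ξ i))) P :=
    fun k i => (integrable_const _).indicator (hmeasset k i)
  have hintk : ∀ k, Integrable (fun a => f (ξ (Ibar k a))) P := by
    intro k
    have : (fun a => f (ξ (Ibar k a))) =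
        fun a => ∑ i, Set.indicator {a | Ibar k a = i} (fun _ => f (ξ i)) a := by
      funext a; exact hdecomp k a
    rw [this]
    exact integrable_finset_sum _ fun i _ => hint1 k i
  have hkey : ∀ k, ∫ a, f (ξ (Ibar k a)) ∂P = ∑ i, wbar i * f (ξ i) := by
    intro k
    calc ∫ a, f (ξ (Ibar k a)) ∂P
        = ∫ a, ∑ i, Set.indicator {a | Ibar k a = i} (fun _ => f (ξ i)) a ∂P := by
          congr 1; funext a; exact hdecomp k a
      _ = ∑ i, ∫ a, Set.indicator {a | Ibar k a = i} (fun _ => f (ξ i)) a ∂P :=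
          integral_finset_sum _ fun i _ => hint1 k i
      _ = ∑ i, wbar i * f (ξ i) := by
          refine Finset.sum_congr rfl fun i _ => ?_
          rw [integral_indicator_const _ (hmeasset k i), Measure.real, hIlaw k i,
            ENNReal.toReal_ofReal (hwbar0 i), smul_eq_mul]
  have hintsum : Integrable (fun a => (1 / (n : ℝ)) * ∑ k, f (ξ (Ibar k a))) P :=
    (integrable_finset_sum _ fun k _ => hintk k).const_mul _
  rw [integral_add (integrable_const _) hintsum, integral_const, integral_const_mul,
    integral_finset_sum _ fun k _ => hintk k]
  simp only [hkey, Finset.sum_const, Finset.card_univ, Fintype.card_fin,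
    probReal_univ, measure_univ, ENNReal.toReal_one, smul_eq_mul, one_mul, nsmul_eq_mul]
  have hcast : ((n - R : ℕ) : ℝ) = (n : ℝ) - R := by
    rw [Nat.cast_sub hRn.le]
  rw [hcast, Finset.mul_sum, Finset.mul_sum, ← Finset.sum_add_distrib]
  refine Finset.sum_congr rfl fun i _ => ?_
  rw [hwbar i]
  have hn0 : (n:ℝ) ≠ 0 := Nat.cast_ne_zero.mpr hn.ne'
  field_simp
  ring
end

section
/- Let m, n be positive integers, ξ_1,…,ξ_m points of a measurable space X, f : X → ℝ, and ω_1,…,ω_m nonnegative real weights with Σ_{i=1}^m ω_i = 1. Set R = Σ_{i=1}^m ⌊n ω_i⌋, assume R < n, define ω̄_i = (n ω_i − ⌊n ω_i⌋)/(n − R), and let Ī^1,…,Ī^{n−R} be i.i.d. random indices with P(Ī^k = i) = ω̄_i. Then Var[ Σ_{i=1}^m (⌊n ω_i⌋/n) f(ξ_i) + (1/n) Σ_{k=1}^{n−R} f(ξ_{Ī^k}) ] = (1/n) Σ_{i=1}^m ω_i f(ξ_i)² − Σ_{i=1}^m (⌊n ω_i⌋/n²) f(ξ_i)² − ((n − R)/n²)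 ( Σ_{i=1}^m ω̄_i f(ξ_i) )². -/
open MeasureTheory ProbabilityTheory Filter Finset

private theorem variance_const_add' {Ω : Type*} [MeasurableSpace Ω] (P : Measure Ω)
    [IsProbabilityMeasure P] (c : ℝ) (Y : Ω → ℝ) (hY : MemLp Y 2 P) :
    variance (fun a => c + Y a) P = variance Y P := by
  have h1 : MemLp (fun a => c + Y a) 2 P := (memLp_const c).add hY
  rw [variance_eq_sub h1, variance_eq_sub hY]
  have hi : Integrable Y P := hY.integrable one_le_two
  have hi2 : Integrable (fun a => Y a ^ 2) P := hY.integrable_sq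
  have hg : Integrable (fun a => 2 * c * Y a + Y a ^ 2) P := by
    exact (hi.const_mul _).add hi2
  have e1 : ∫ a, (c + Y a) ∂P = c + ∫ a, Y a ∂P := by
    rw [integral_add (integrable_const c) hi, integral_const]; simp
  have e2 : ∫ a, (c + Y a) ^ 2 ∂P
      = c ^ 2 + 2 * c * ∫ a, Y a ∂P + ∫ a, Y a ^ 2 ∂P := by
    have h : (fun a => (c + Y a) ^ 2) = fun a => c ^ 2 + (2 * c * Y a + Y a ^ 2) := by
      funext a; ring
    rw [h, integral_add (integrable_const _) hg,
      integral_add (hi.const_mul _) hi2, integral_const, integral_const_mul]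
    simp; ring
  simp only [Pi.pow_apply]
  rw [e2, e1]; ring

/-- variance of the residual resampling estimator.
With `R = ∑_i ⌊n w i⌋ < n`, residual weights `w̄ i = (n w i − ⌊n w i⌋)/(n − R)` and
i.i.d. residual indices `Ī k` with `P(Ī k = i) = w̄ i`,
`Var[∑_i (⌊n w i⌋/n) f(ξ i) + (1/n) ∑_k f(ξ_{Ī k})]
  = (1/n) ∑_i w i f(ξ i)² − ∑_i (⌊n w i⌋/n²) f(ξ i)² − ((n−R)/n²)(∑_i w̄ i f(ξ i))²`. -/
theorem residual_resampling_variance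
    {X : Type*} [MeasurableSpace X] {Ω : Type*} [MeasurableSpace Ω]
    (P : Measure Ω) [IsProbabilityMeasure P]
    (m n : ℕ) (hm : 0 < m) (hn : 0 < n)
    (ξ : Fin m → X) (f : X → ℝ)
    (w : Fin m → ℝ) (hw : ∀ i, 0 ≤ w i) (hw1 : ∑ i, w i = 1)
    (R : ℕ) (hR : (R : ℤ) = ∑ i, ⌊(n : ℝ) * w i⌋) (hRn : R < n)
    (wbar : Fin m → ℝ)
    (hwbar : ∀ i, wbar i = ((n : ℝ) * w i - ⌊(n : ℝ) * w i⌋) / ((n : ℝ) - R))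
    (Ibar : Fin (n - R) → Ω → Fin m) (hImeas : ∀ k, Measurable (Ibar k))
    (hIindep : iIndepFun Ibar P)
    (hIlaw : ∀ k i, P {a | Ibar k a = i} = ENNReal.ofReal (wbar i)) :
    variance (fun a => (∑ i, ((⌊(n : ℝ) * w i⌋ : ℝ) / (n : ℝ)) * f (ξ i))
        + (1 / (n : ℝ)) * ∑ k, f (ξ (Ibar k a))) P
      = (1 / (n : ℝ)) * ∑ i, w i * f (ξ i) ^ 2
        - ∑ i, ((⌊(n : ℝ) * w i⌋ : ℝ) / (n : ℝ) ^ 2) * f (ξ i) ^ 2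
        - (((n : ℝ) - R) / (n : ℝ) ^ 2) * (∑ i, wbar i * f (ξ i)) ^ 2 := by
  have hn0 : (n : ℝ) ≠ 0 := Nat.cast_ne_zero.mpr hn.ne'
  have hNR : (0 : ℝ) < (n : ℝ) - R := by
    have : (R : ℝ) < n := Nat.cast_lt.mpr hRn
    linarith
  have hwbar_nonneg : ∀ i, 0 ≤ wbar i := by
    intro i
    rw [hwbar i]
    apply div_nonneg _ hNR.le
    have := Int.floor_le ((n : ℝ) * w i)
    linarith
  -- the function on indices
  set g : Fin m → ℝ := fun i => f (ξ i) with hg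
  have hgm : Measurable g := measurable_of_countable g
  -- integral of any function of Ibar k
  have hint : ∀ (k : Fin (n - R)) (h : Fin m → ℝ),
      ∫ a, h (Ibar k a) ∂P = ∑ i, wbar i * h i := by
    intro k h
    have hmap : ∀ i : Fin m, (P.map (Ibar k)) {i} = ENNReal.ofReal (wbar i) := by
      intro i
      rw [Measure.map_apply (hImeas k) (measurableSet_singleton i)]
      exact hIlaw k i
    have : IsProbabilityMeasure (P.map (Ibar k)) :=
      Measure.isProbabilityMeasure_map (hImeas k).aemeasurable
    rw [← integral_map (hImeas k).aemeasurable
        (measurable_of_countable h).aestronglyMeasurable,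
      integral_fintype Integrable.of_finite]
    refine Finset.sum_congr rfl fun i _ => ?_
    rw [measureReal_def, hmap i, smul_eq_mul, ENNReal.toReal_ofReal (hwbar_nonneg i)]
  -- L² membership
  have hmem : ∀ k : Fin (n - R), MemLp (fun a => g (Ibar k a)) 2 P := by
    intro k
    refine MemLp.of_bound ((hgm.comp (hImeas k)).aestronglyMeasurable)
      (∑ i, |g i|) (Filter.Eventually.of_forall fun a => ?_)
    calc ‖g (Ibar k a)‖ = |g (Ibar k a)| := rfl
      _ ≤ ∑ i, |g i| := Finset.single_le_sum (fun i _ => abs_nonneg (g i)) (mem_univ _)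
  -- variance of each summand
  have hvar : ∀ k : Fin (n - R),
      variance (fun a => g (Ibar k a)) P
        = (∑ i, wbar i * g i ^ 2) - (∑ i, wbar i * g i) ^ 2 := by
    intro k
    rw [variance_eq_sub (hmem k)]
    have h2 : (fun a => g (Ibar k a)) ^ 2 = fun a => (fun i => g i ^ 2) (Ibar k a) := by
      funext a; simp [Pi.pow_apply]
    rw [h2, hint k (fun i => g i ^ 2), hint k g]
  -- rewrite the random variable
  have hsum_eq : (fun a => ∑ k, g (Ibar k a))
      = ∑ k, (fun a => g (Ibar k a)) := by
    funext a; simp [Finset.sum_apply]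
  have hmemS : MemLp (fun a => ∑ k, g (Ibar k a)) 2 P := by
    rw [hsum_eq]; exact memLp_finset_sum' _ fun k _ => hmem k
  have hpair : Set.Pairwise (↑(Finset.univ : Finset (Fin (n - R))))
      fun i j => IndepFun (fun a => g (Ibar i a)) (fun a => g (Ibar j a)) P := by
    intro i _ j _ hij
    exact (hIindep.indepFun hij).comp hgm hgm
  have step1 : variance (fun a => (∑ i, ((⌊(n : ℝ) * w i⌋ : ℝ) / (n : ℝ)) * f (ξ i))
        + (1 / (n : ℝ)) * ∑ k, f (ξ (Ibar k a))) P
      = (1 / (n : ℝ)) ^ 2 * ∑ k : Fin (n - R),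
        variance (fun a => g (Ibar k a)) P := by
    rw [variance_const_add' P _ _ (hmemS.const_mul _)]
    rw [show (fun a => (1 / (n : ℝ)) * ∑ k, g (Ibar k a))
        = fun a => (1 / (n : ℝ)) * (fun b => ∑ k, g (Ibar k b)) a from rfl]
    rw [variance_const_mul, hsum_eq]
    rw [IndepFun.variance_sum (fun k _ => hmem k) hpair]
  rw [step1]
  simp only [hvar]
  rw [Finset.sum_const, card_univ, Fintype.card_fin]
  -- algebra
  have key : ∀ i, ((n : ℝ) - R) * wbar i = (n : ℝ) * w i - ⌊(n : ℝ) * w i⌋ := by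
    intro i; rw [hwbar i]; field_simp
  have hcast : ((n - R : ℕ) : ℝ) = (n : ℝ) - R := by
    rw [Nat.cast_sub hRn.le]
  rw [nsmul_eq_mul, hcast]
  have hA2 : ((n : ℝ) - R) * ∑ i, wbar i * g i ^ 2
      = ∑ i, ((n : ℝ) * w i - ⌊(n : ℝ) * w i⌋) * g i ^ 2 := by
    rw [Finset.mul_sum]
    exact Finset.sum_congr rfl fun i _ => by rw [← mul_assoc, key i]
  have hsplit : (1 / (n : ℝ)) ^ 2 * ∑ i, ((n : ℝ) * w i - ⌊(n : ℝ) * w i⌋) * g i ^ 2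
      = (1 / (n : ℝ)) * ∑ i, w i * g i ^ 2
        - ∑ i, ((⌊(n : ℝ) * w i⌋ : ℝ) / (n : ℝ) ^ 2) * g i ^ 2 := by
    rw [Finset.mul_sum, Finset.mul_sum, ← Finset.sum_sub_distrib]
    refine Finset.sum_congr rfl fun i _ => ?_
    have : ((⌊(n : ℝ) * w i⌋ : ℤ) : ℝ) = ((⌊(n : ℝ) * w i⌋ : ℤ) : ℝ) := rfl
    generalize ((⌊(n : ℝ) * w i⌋ : ℤ) : ℝ) = c
    field_simp
  calc (1 / (n : ℝ)) ^ 2 * (((n : ℝ) - R) *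
        ((∑ i, wbar i * g i ^ 2) - (∑ i, wbar i * g i) ^ 2))
      = (1 / (n : ℝ)) ^ 2 * (((n : ℝ) - R) * ∑ i, wbar i * g i ^ 2)
        - (((n : ℝ) - R) / (n : ℝ) ^ 2) * (∑ i, wbar i * g i) ^ 2 := by
        field_simp
    _ = _ := by rw [hA2, hsplit]
end

section
/- Let m, n be positive integers, ξ_1,…,ξ_m points of a measurable space X, f : X → ℝ, and ω_1,…,ω_m nonnegative real weights with Σ_{i=1}^m ω_i = 1. Set R = Σ_{i=1}^m ⌊n ω_i⌋, assume R < n, define ω̄_i = (n ω_i − ⌊n ω_i⌋)/(n − R), and let Ī^1,…,Ī^{n−R} be i.i.d. random indices with P(Ī^k = i) = ω̄_i. Then the variance of the residual resampling estimator is no larger than that of multinomial resampling: Var[ Σ_{i=1}^m (⌊n ω_i⌋/n) f(ξ_i) + (1/n) Σ_{k=1}^{n−R} f(ξ_{Ī^k}) ] ≤ (1/n) { Σ_{i=1}^m ω_i f(ξ_i)² − ( Σ_{i=1}^m ω_i f(ξ_i) )² }. -/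
open MeasureTheory ProbabilityTheory Filter Finset

lemma jensen_sq_aux {ι : Type*} [Fintype ι] (c x : ι → ℝ) (hc : ∀ i, 0 ≤ c i)
    (h1 : ∑ i, c i = 1) :
    (∑ i, c i * x i) ^ 2 ≤ ∑ i, c i * x i ^ 2 := by
  have h := Finset.sum_sq_le_sum_mul_sum_of_sq_eq_mul Finset.univ
    (r := fun i => c i * x i) (f := fun i => c i) (g := fun i => c i * x i ^ 2)
    (fun i _ => hc i) (fun i _ => mul_nonneg (hc i) (sq_nonneg _))
    (fun i _ => by ring)
  rw [h1, one_mul] at h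
  exact h

lemma variance_const_add_aux {Ω : Type*} [MeasurableSpace Ω] (P : Measure Ω)
    [IsProbabilityMeasure P] (c : ℝ) (T : Ω → ℝ) (hT : Integrable T P) :
    variance (fun a => c + T a) P = variance T P := by
  have hint : ∫ a, (c + T a) ∂P = c + ∫ a, T a ∂P := by
    rw [integral_add (integrable_const c) hT, integral_const]
    simp
  unfold ProbabilityTheory.variance ProbabilityTheory.evariance
  congr 1
  refine lintegral_congr fun a => ?_
  rw [hint]
  ring_nf

/-- the variance of the residual resampling estimator is no larger than
that of multinomial resampling, namely `(1/n){∑_i w i f(ξ i)² − (∑_i w i f(ξ i))²}`. -/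
theorem residual_le_multinomial_variance
    {X : Type*} [MeasurableSpace X] {Ω : Type*} [MeasurableSpace Ω]
    (P : Measure Ω) [IsProbabilityMeasure P]
    (m n : ℕ) (hm : 0 < m) (hn : 0 < n)
    (ξ : Fin m → X) (f : X → ℝ)
    (w : Fin m → ℝ) (hw : ∀ i, 0 ≤ w i) (hw1 : ∑ i, w i = 1)
    (R : ℕ) (hR : (R : ℤ) = ∑ i, ⌊(n : ℝ) * w i⌋) (hRn : R < n)
    (wbar : Fin m → ℝ)
    (hwbar : ∀ i, wbar i = ((n : ℝ) * w i - ⌊(n : ℝ) * w i⌋) / ((n : ℝ) - R))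
    (Ibar : Fin (n - R) → Ω → Fin m) (hImeas : ∀ k, Measurable (Ibar k))
    (hIindep : iIndepFun Ibar P)
    (hIlaw : ∀ k i, P {a | Ibar k a = i} = ENNReal.ofReal (wbar i)) :
    variance (fun a => (∑ i, ((⌊(n : ℝ) * w i⌋ : ℝ) / (n : ℝ)) * f (ξ i))
        + (1 / (n : ℝ)) * ∑ k, f (ξ (Ibar k a))) P
      ≤ (1 / (n : ℝ)) *
        ((∑ i, w i * f (ξ i) ^ 2) - (∑ i, w i * f (ξ i)) ^ 2) := by
  classical
  set g : Fin m → ℝ := fun i => f (ξ i) with hg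
  have hn' : (0 : ℝ) < n := by exact_mod_cast hn
  have hnR' : (0 : ℝ) < (n : ℝ) - R := by
    have : (R : ℝ) < n := by exact_mod_cast hRn
    linarith
  -- basic facts about the weights
  have hfloor_le : ∀ i, ((⌊(n : ℝ) * w i⌋ : ℝ)) ≤ (n : ℝ) * w i := fun i => Int.floor_le _
  have hfloor_nonneg : ∀ i, (0 : ℝ) ≤ ((⌊(n : ℝ) * w i⌋ : ℝ)) := by
    intro i
    have : (0 : ℤ) ≤ ⌊(n : ℝ) * w i⌋ := Int.floor_nonneg.mpr (mul_nonneg hn'.le (hw i))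
    exact_mod_cast this
  have hwbar_nonneg : ∀ i, 0 ≤ wbar i := by
    intro i
    rw [hwbar i]
    exact div_nonneg (by linarith [hfloor_le i]) hnR'.le
  have hsum_floor : ∑ i, ((⌊(n : ℝ) * w i⌋ : ℝ)) = (R : ℝ) := by
    have h : ((∑ i, ⌊(n : ℝ) * w i⌋ : ℤ) : ℝ) = (R : ℝ) := by exact_mod_cast hR.symm
    push_cast at h
    linarith [h]
  -- the random variables
  set Y : Fin (n - R) → Ω → ℝ := fun k a => g (Ibar k a) with hY
  have hgmeas : Measurable g := measurable_of_finite g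
  have hYmeas : ∀ k, Measurable (Y k) := fun k => hgmeas.comp (hImeas k)
  -- expectation of any h ∘ (Ibar k)
  have hexp : ∀ (k : Fin (n - R)) (h : Fin m → ℝ),
      ∫ a, h (Ibar k a) ∂P = ∑ i, wbar i * h i := by
    intro k h
    have hmapP : IsProbabilityMeasure (P.map (Ibar k)) :=
      Measure.isProbabilityMeasure_map (hImeas k).aemeasurable
    rw [← integral_map (hImeas k).aemeasurable
      (measurable_of_finite h).aestronglyMeasurable]
    rw [integral_fintype (Integrable.of_finite)]
    refine Finset.sum_congr rfl fun i _ => ?_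
    have : (P.map (Ibar k)) {i} = ENNReal.ofReal (wbar i) := by
      rw [Measure.map_apply (hImeas k) (measurableSet_singleton i)]
      exact hIlaw k i
    rw [Measure.real_def, this, ENNReal.toReal_ofReal (hwbar_nonneg i), smul_eq_mul]
  -- Memℒp of each Y k
  have hYL2 : ∀ k, MemLp (Y k) 2 P := by
    intro k
    refine MemLp.of_bound (hYmeas k).aestronglyMeasurable (∑ i, |g i|) ?_
    refine Filter.Eventually.of_forall fun a => ?_
    have : |g (Ibar k a)| ≤ ∑ i, |g i| :=
      Finset.single_le_sum (f := fun i => |g i|) (fun i _ => abs_nonneg _) (Finset.mem_univ _)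
    simpa [Real.norm_eq_abs] using this
  -- variance of each Y k
  set σbar : ℝ := ∑ i, wbar i * g i ^ 2 with hσbar
  set μbar : ℝ := ∑ i, wbar i * g i with hμbar
  have hvarY : ∀ k, variance (Y k) P = σbar - μbar ^ 2 := by
    intro k
    rw [variance_eq_sub (hYL2 k)]
    have h1 : (∫ a, (Y k ^ 2) a ∂P) = σbar := by
      have : (fun a => (Y k ^ 2) a) = fun a => (fun i => g i ^ 2) (Ibar k a) := by
        funext a; simp [hY]
      rw [this, hexp k (fun i => g i ^ 2)]
    have h2 : (∫ a, Y k a ∂P) = μbar := hexp k g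
    rw [h1, h2]
  -- independence of the Y k
  have hYindep : Set.Pairwise (↑(Finset.univ : Finset (Fin (n - R))))
      fun k l => IndepFun (Y k) (Y l) P := by
    intro k _ l _ hkl
    exact (hIindep.indepFun hkl).comp hgmeas hgmeas
  -- compute the variance of the estimator
  have hsum_apply : (fun a => ∑ k, Y k a) = ∑ k, Y k := by
    funext a; rw [Finset.sum_apply]
  have hTint : Integrable (fun a => (1 / (n : ℝ)) * ∑ k, Y k a) P := by
    exact Integrable.const_mul
      (integrable_finset_sum _ fun k _ => (hYL2 k).integrable one_le_two) _
  have hvar : variance (fun a => (∑ i, ((⌊(n : ℝ) * w i⌋ : ℝ) / (n : ℝ)) * g i)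
      + (1 / (n : ℝ)) * ∑ k, Y k a) P
      = (1 / (n : ℝ)) ^ 2 * (((n - R : ℕ) : ℝ) * (σbar - μbar ^ 2)) := by
    rw [variance_const_add_aux P _ _ hTint, variance_const_mul, hsum_apply,
      IndepFun.variance_sum (fun k _ => hYL2 k) hYindep]
    simp only [hvarY, Finset.sum_const, Finset.card_univ, Fintype.card_fin, nsmul_eq_mul]
  rw [hvar]
  -- weight decomposition
  have hdecomp : ∀ i, w i = ((⌊(n : ℝ) * w i⌋ : ℝ)) / n + (((n : ℝ) - R) / n) * wbar i := by
    intro i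
    have key : ((n : ℝ) - R) * wbar i = (n : ℝ) * w i - ((⌊(n : ℝ) * w i⌋ : ℝ)) := by
      rw [hwbar i]; field_simp
    calc w i = ((n : ℝ) * w i) / n := by field_simp
      _ = (((⌊(n : ℝ) * w i⌋ : ℝ)) + ((n : ℝ) - R) * wbar i) / n := by
          congr 1; linarith [key]
      _ = ((⌊(n : ℝ) * w i⌋ : ℝ)) / n + (((n : ℝ) - R) / n) * wbar i := by ring
  set a : Fin m → ℝ := fun i => ((⌊(n : ℝ) * w i⌋ : ℝ)) / n with ha
  set b : ℝ := ((n : ℝ) - R) / n with hb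
  have hb_nonneg : 0 ≤ b := div_nonneg hnR'.le hn'.le
  have ha_nonneg : ∀ i, 0 ≤ a i := fun i => div_nonneg (hfloor_nonneg i) hn'.le
  have hab : b + ∑ i, a i = 1 := by
    simp only [ha, ← Finset.sum_div, hsum_floor, hb]
    field_simp
    ring
  -- rewrite the two sums
  have hS2 : ∑ i, w i * g i ^ 2 = (∑ i, a i * g i ^ 2) + b * σbar := by
    rw [hσbar, Finset.mul_sum, ← Finset.sum_add_distrib]
    refine Finset.sum_congr rfl fun i _ => ?_
    rw [hdecomp i]; ring
  have hS1 : ∑ i, w i * g i = (∑ i, a i * g i) + b * μbar := by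
    rw [hμbar, Finset.mul_sum, ← Finset.sum_add_distrib]
    refine Finset.sum_congr rfl fun i _ => ?_
    rw [hdecomp i]; ring
  have hcast : ((n - R : ℕ) : ℝ) = (n : ℝ) - R := by
    rw [Nat.cast_sub hRn.le]
  -- Jensen step
  have hjensen : ((∑ i, a i * g i) + b * μbar) ^ 2 ≤ (∑ i, a i * g i ^ 2) + b * μbar ^ 2 := by
    have := jensen_sq_aux (ι := Fin (m + 1)) (Fin.cons b a) (Fin.cons μbar g)
      (fun i => Fin.cases hb_nonneg ha_nonneg i)
      (by rw [Fin.sum_cons]; exact hab)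
    rw [Fin.sum_univ_succ, Fin.sum_univ_succ] at this
    simp only [Fin.cons_zero, Fin.cons_succ] at this
    calc ((∑ i, a i * g i) + b * μbar) ^ 2
        = (b * μbar + ∑ i, a i * g i) ^ 2 := by ring
      _ ≤ b * μbar ^ 2 + ∑ i, a i * g i ^ 2 := this
      _ = (∑ i, a i * g i ^ 2) + b * μbar ^ 2 := by ring
  -- conclude
  rw [hS2, hS1, hcast]
  have heq : (1 / (n : ℝ)) ^ 2 * (((n : ℝ) - R) * (σbar - μbar ^ 2))
      = (1 / (n : ℝ)) * (b * σbar - b * μbar ^ 2) := by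
    rw [hb]; field_simp
  rw [heq]
  refine mul_le_mul_of_nonneg_left ?_ (by positivity)
  linarith [hjensen]
end

section
/- Let m, n be positive integers, ξ_1,…,ξ_m points of a measurable space X, f : X → ℝ bounded measurable, and ω_1,…,ω_m nonnegative real weights with Σ_{i=1}^m ω_i = 1. Let D_ω^inv : (0,1] → {1,…,m} be defined by D_ω^inv(u) = i for u ∈ ( Σ_{j=1}^{i−1} ω_j , Σ_{j=1}^{i} ω_j ]. Let U^1,…,U^n be independent random variables with U^i uniformly distributed on the interval ((i−1)/n, i/n]. Then stratified resampling is unbiased: E[ Σ_{i=1}^n f(ξ_{D_ω^inv(U^i)}) ] = n Σ_{i=1}^m ω_i f(ξ_i). -/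
open MeasureTheory ProbabilityTheory Filter Finset

lemma aux_integrableOn {g : ℝ → ℝ} (hg : Measurable g) {C : ℝ}
    (hgb : ∀ x, |g x| ≤ C) (a b : ℝ) :
    IntegrableOn g (Set.Ioc a b) := by
  have h1 : IntegrableOn (fun _ : ℝ => C) (Set.Ioc a b) :=
    integrableOn_const measure_Ioc_lt_top.ne
  exact h1.mono' hg.aestronglyMeasurable.restrict
    (ae_of_all _ fun x => by simpa [Real.norm_eq_abs] using hgb x)

lemma aux_tele {g : ℝ → ℝ} (hg : Measurable g) {C : ℝ} (hgb : ∀ x, |g x| ≤ C)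
    {a : ℕ → ℝ} (ha : Monotone a) (N : ℕ) :
    ∑ i ∈ Finset.range N, (∫ u in Set.Ioc (a i) (a (i+1)), g u)
      = ∫ u in Set.Ioc (a 0) (a N), g u := by
  induction N with
  | zero => simp
  | succ N ih =>
    rw [Finset.sum_range_succ, ih, ← setIntegral_union (Set.Ioc_disjoint_Ioc_of_le le_rfl)
      measurableSet_Ioc (aux_integrableOn hg hgb _ _) (aux_integrableOn hg hgb _ _),
      Set.Ioc_union_Ioc_eq_Ioc (ha (Nat.zero_le N)) (ha (Nat.le_succ N))]

/-- unbiasedness of stratified resampling.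
`Dinv` is the inverse cdf of the normalized weights (`Dinv u = i` on
`(∑_{j<i} w j, ∑_{j≤i} w j]`), and the `U i` are independent with `U i` uniform on
`((i−1)/n, i/n]`.  Then `E[∑_i f(ξ_{Dinv(U i)})] = n ∑_i w i f(ξ i)`. -/
theorem stratified_resampling_unbiased
    {X : Type*} [MeasurableSpace X] {Ω : Type*} [MeasurableSpace Ω]
    (P : Measure Ω) [IsProbabilityMeasure P]
    (m n : ℕ) (hm : 0 < m) (hn : 0 < n)
    (ξ : Fin m → X) (f : X → ℝ) (hf : Measurable f) (hfb : ∃ C, ∀ x, |f x| ≤ C)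
    (w : Fin m → ℝ) (hw : ∀ i, 0 ≤ w i) (hw1 : ∑ i, w i = 1)
    (Dinv : ℝ → Fin m) (hDmeas : Measurable Dinv)
    (hDinv : ∀ (u : ℝ) (i : Fin m),
      u ∈ Set.Ioc (∑ j ∈ Finset.Iio i, w j) (∑ j ∈ Finset.Iic i, w j) → Dinv u = i)
    (U : Fin n → Ω → ℝ) (hUmeas : ∀ i, Measurable (U i))
    (hUindep : iIndepFun U P)
    (hUlaw : ∀ i : Fin n, Measure.map (U i) P
      = (n : ENNReal) • volume.restrict (Set.Ioc (((i : ℕ) : ℝ) / n) (((i : ℕ) + 1 : ℝ) / n))) :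
    ∫ a, ∑ i : Fin n, f (ξ (Dinv (U i a))) ∂P = n * ∑ i, w i * f (ξ i) := by
  obtain ⟨C, hC⟩ := hfb
  set g : ℝ → ℝ := fun u => f (ξ (Dinv u)) with hgdef
  have hg : Measurable g := hf.comp ((Measurable.of_discrete (f := ξ)).comp hDmeas)
  have hgb : ∀ u, |g u| ≤ C := fun u => hC _
  -- extended weights and partial sums
  set v : ℕ → ℝ := fun k => if h : k < m then w ⟨k, h⟩ else 0 with hvdef
  set s : ℕ → ℝ := fun k => ∑ j ∈ Finset.range k, v j with hsdef
  have hv0 : ∀ k, 0 ≤ v k := fun k => by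
    by_cases h : k < m <;> simp [hvdef, h, hw]
  have hsmono : Monotone s := monotone_nat_of_le_succ fun k => by
    simp only [hsdef, Finset.sum_range_succ]
    linarith [hv0 k]
  have hsm : s m = 1 := by
    have h : ∑ j ∈ Finset.range m, v j = ∑ i : Fin m, w i := by
      rw [← Fin.sum_univ_eq_sum_range v]
      exact Finset.sum_congr rfl fun i _ => by simp [hvdef, i.isLt]
    simpa [hsdef] using h.trans hw1
  -- integrability
  have hint : ∀ i : Fin n, Integrable (fun a => g (U i a)) P := fun i => by
    refine (integrable_const C).mono' ((hg.comp (hUmeas i)).aestronglyMeasurable) ?_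
    exact ae_of_all _ fun a => by simpa [Real.norm_eq_abs] using hgb (U i a)
  rw [integral_finset_sum _ (fun i _ => hint i)]
  -- each term via the law of U i
  have hmap : ∀ i : Fin n, (∫ a, g (U i a) ∂P)
      = n * ∫ u in Set.Ioc (((i : ℕ) : ℝ) / n) (((i : ℕ) + 1 : ℝ) / n), g u := by
    intro i
    rw [← integral_map (hUmeas i).aemeasurable hg.aestronglyMeasurable, hUlaw i,
      integral_smul_measure]
    simp [smul_eq_mul]
  simp_rw [hmap]
  rw [← Finset.mul_sum]
  -- sum over strata = integral over (0,1]
  have hdiv : Monotone (fun k : ℕ => (k : ℝ) / n) := fun a b hab => by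
    apply div_le_div_of_nonneg_right ?_ (by positivity)
    · exact_mod_cast hab
  have hsum1 : ∑ i : Fin n, ∫ u in Set.Ioc (((i : ℕ) : ℝ) / n) (((i : ℕ) + 1 : ℝ) / n), g u
      = ∫ u in Set.Ioc (0 : ℝ) 1, g u := by
    have := aux_tele hg hgb hdiv n
    rw [Fin.sum_univ_eq_sum_range
      (fun k => ∫ u in Set.Ioc ((k : ℝ) / n) (((k : ℝ) + 1) / n), g u)]
    have hn' : (n : ℝ) ≠ 0 := Nat.cast_ne_zero.mpr hn.ne'
    calc ∑ k ∈ Finset.range n, ∫ u in Set.Ioc ((k : ℝ) / n) (((k : ℝ) + 1) / n), g u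
        = ∑ k ∈ Finset.range n, ∫ u in Set.Ioc ((k : ℝ) / n) (((k + 1 : ℕ) : ℝ) / n), g u := by
          refine Finset.sum_congr rfl fun k _ => ?_
          norm_num [Nat.cast_add]
      _ = ∫ u in Set.Ioc (((0:ℕ) : ℝ) / n) (((n:ℕ) : ℝ) / n), g u := this
      _ = ∫ u in Set.Ioc (0 : ℝ) 1, g u := by rw [Nat.cast_zero, zero_div, div_self hn']
  rw [hsum1]
  -- integral over (0,1] = weighted sum
  have htele2 := aux_tele hg hgb hsmono m
  have hs0 : s 0 = 0 := by simp [hsdef]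
  rw [hs0, hsm] at htele2
  rw [← htele2]
  have hfin : ∑ i : Fin m, w i * f (ξ i)
      = ∑ k ∈ Finset.range m, if h : k < m then w ⟨k, h⟩ * f (ξ ⟨k, h⟩) else 0 := by
    rw [← Fin.sum_univ_eq_sum_range (fun k => if h : k < m then w ⟨k, h⟩ * f (ξ ⟨k, h⟩) else 0)]
    exact (Finset.sum_congr rfl fun i _ => by simp [i.isLt]).symm
  rw [hfin]
  congr 1
  apply Finset.sum_congr rfl
  intro k hk
  have hkm : k < m := Finset.mem_range.mp hk
  rw [dif_pos hkm]
  have hIio : ∑ j ∈ Finset.Iio (⟨k, hkm⟩ : Fin m), w j = s k := by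
    have h : ∑ j ∈ (Finset.Iio (⟨k, hkm⟩ : Fin m)).map Fin.valEmbedding, v j
        = ∑ j ∈ Finset.Iio (⟨k, hkm⟩ : Fin m), w j := by
      rw [Finset.sum_map]
      exact Finset.sum_congr rfl fun j _ => by simp [hvdef, j.isLt]
    rw [← h, Fin.map_valEmbedding_Iio, hsdef]
    simp [Nat.Iio_eq_range]
  have hIic : ∑ j ∈ Finset.Iic (⟨k, hkm⟩ : Fin m), w j = s (k+1) := by
    have h : ∑ j ∈ (Finset.Iic (⟨k, hkm⟩ : Fin m)).map Fin.valEmbedding, v j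
        = ∑ j ∈ Finset.Iic (⟨k, hkm⟩ : Fin m), w j := by
      rw [Finset.sum_map]
      exact Finset.sum_congr rfl fun j _ => by simp [hvdef, j.isLt]
    rw [← h, Fin.map_valEmbedding_Iic, hsdef]
    have h2 : Finset.Iic k = Finset.range (k+1) := by
      ext j; simp [Nat.lt_succ_iff]
    simp [h2]
  have hval : ∀ u ∈ Set.Ioc (s k) (s (k+1)), g u = f (ξ ⟨k, hkm⟩) := by
    intro u hu
    rw [hgdef]
    simp only
    rw [hDinv u ⟨k, hkm⟩ (by rw [hIio, hIic]; exact hu)]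
  rw [setIntegral_congr_fun measurableSet_Ioc hval, setIntegral_const,
    Real.volume_real_Ioc_of_le (hsmono (Nat.le_succ k)), smul_eq_mul]
  have hvk : s (k+1) - s k = v k := by simp [hsdef, Finset.sum_range_succ]
  rw [hvk]
  simp [hvdef, hkm]
end

section
/- Let m, n be positive integers, ξ_1,…,ξ_m points of a measurable space X, f : X → ℝ bounded measurable, and ω_1,…,ω_m nonnegative real weights with Σ_{i=1}^m ω_i = 1. Let D_ω^inv(u) = i for u ∈ ( Σ_{j=1}^{i−1} ω_j , Σ_{j=1}^{i} ω_j ], and let U^1,…,U^n be independent with U^i uniform on ((i−1)/n, i/n]. Then the variance of the stratified resampling estimator is no larger than that of multinomial resampling: Var[ (1/n) Σ_{i=1}^n f(ξ_{D_ω^inv(U^i)}) ] ≤ (1/n) { Σ_{i=1}^m ω_i f(ξ_i)² − ( Σ_{i=1}^m ω_i f(ξ_i) )² }. -/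
open MeasureTheory ProbabilityTheory Filter Finset

lemma myIntervalIntegrable {h : ℝ → ℝ} (hh : Measurable h)
    {C : ℝ} (hC : ∀ x, |h x| ≤ C) (a b : ℝ) : IntervalIntegrable h volume a b :=
  ⟨Measure.integrableOn_of_bounded measure_Ioc_lt_top.ne hh.aestronglyMeasurable
      (ae_of_all _ fun x => by simpa using hC x),
   Measure.integrableOn_of_bounded measure_Ioc_lt_top.ne hh.aestronglyMeasurable
      (ae_of_all _ fun x => by simpa using hC x)⟩

lemma mySumPartition {G : ℝ → ℝ} (hG : Measurable G)
    {C : ℝ} (hC : ∀ x, |G x| ≤ C) {k : ℕ} (s : ℕ → ℝ)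
    (hmono : ∀ j, s j ≤ s (j + 1)) (h0 : s 0 = 0) (h1 : s k = 1) :
    ∑ j ∈ Finset.range k, ∫ u in Set.Ioc (s j) (s (j + 1)), G u
      = ∫ u in Set.Ioc (0 : ℝ) 1, G u := by
  have hM : Monotone s := monotone_nat_of_le_succ hmono
  have := intervalIntegral.sum_integral_adjacent_intervals
    (a := s) (μ := volume) (f := G) (n := k)
    (fun j _ => myIntervalIntegrable hG hC _ _)
  calc ∑ j ∈ Finset.range k, ∫ u in Set.Ioc (s j) (s (j + 1)), G u
      = ∑ j ∈ Finset.range k, ∫ u in (s j)..(s (j + 1)), G u := by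
        refine Finset.sum_congr rfl fun j _ => ?_
        rw [intervalIntegral.integral_of_le (hmono j)]
    _ = ∫ u in (s 0)..(s k), G u := this
    _ = ∫ u in Set.Ioc (s 0) (s k), G u :=
        intervalIntegral.integral_of_le (hM (Nat.zero_le k))
    _ = ∫ u in Set.Ioc (0 : ℝ) 1, G u := by rw [h0, h1]

lemma myWeights {m : ℕ} (w : Fin m → ℝ) (hw : ∀ i, 0 ≤ w i)
    (hw1 : ∑ i, w i = 1) {G : ℝ → ℝ} (hG : Measurable G) {C : ℝ} (hC : ∀ x, |G x| ≤ C)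
    (c : Fin m → ℝ)
    (hGc : ∀ (u : ℝ) (i : Fin m),
      u ∈ Set.Ioc (∑ j ∈ Finset.Iio i, w j) (∑ j ∈ Finset.Iic i, w j) → G u = c i) :
    ∫ u in Set.Ioc (0 : ℝ) 1, G u = ∑ i, w i * c i := by
  classical
  set s : ℕ → ℝ := fun k => ∑ j ∈ Finset.univ.filter (fun j : Fin m => (j : ℕ) < k), w j
    with hs
  have hA : ∀ i : Fin m, s (i : ℕ) = ∑ j ∈ Finset.Iio i, w j := by
    intro i
    refine Finset.sum_congr ?_ fun _ _ => rfl
    ext j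
    simp only [Finset.mem_filter, Finset.mem_univ, true_and, Finset.mem_Iio, Fin.lt_def]
  have hB : ∀ i : Fin m, s ((i : ℕ) + 1) = ∑ j ∈ Finset.Iic i, w j := by
    intro i
    refine Finset.sum_congr ?_ fun _ _ => rfl
    ext j
    simp only [Finset.mem_filter, Finset.mem_univ, true_and, Finset.mem_Iic, Fin.le_def, Nat.lt_succ_iff]
  have hmono : ∀ j, s j ≤ s (j + 1) := by
    intro j
    refine Finset.sum_le_sum_of_subset_of_nonneg ?_ (fun i _ _ => hw i)
    intro i hi
    simp only [Finset.mem_filter, Finset.mem_univ, true_and] at hi ⊢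
    omega
  have h0 : s 0 = 0 := by simp [hs]
  have h1 : s m = 1 := by
    rw [← hw1]
    refine Finset.sum_congr ?_ fun _ _ => rfl
    ext j; simp [j.isLt]
  have key : ∀ i : Fin m,
      w i * c i = ∫ u in Set.Ioc (s (i : ℕ)) (s ((i : ℕ) + 1)), G u := by
    intro i
    rw [hA i, hB i]
    have hconst : ∀ u ∈ Set.Ioc (∑ j ∈ Finset.Iio i, w j) (∑ j ∈ Finset.Iic i, w j),
        G u = c i := fun u hu => hGc u i hu
    rw [setIntegral_congr_fun measurableSet_Ioc hconst, setIntegral_const]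
    have hdiff : (∑ j ∈ Finset.Iic i, w j) - (∑ j ∈ Finset.Iio i, w j) = w i := by
      have : ∑ j ∈ Finset.Iic i, w j = w i + ∑ j ∈ Finset.Iio i, w j := by
        rw [← Finset.sum_insert (by simp), Finset.Iio_insert]
      rw [this]; ring
    rw [measureReal_def, Real.volume_Ioc, ENNReal.toReal_ofReal (by rw [hdiff]; exact hw i), hdiff,
      smul_eq_mul]
  calc ∫ u in Set.Ioc (0 : ℝ) 1, G u
      = ∑ j ∈ Finset.range m, ∫ u in Set.Ioc (s j) (s (j + 1)), G u :=
        (mySumPartition hG hC s hmono h0 h1).symm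
    _ = ∑ i : Fin m, ∫ u in Set.Ioc (s (i : ℕ)) (s ((i : ℕ) + 1)), G u :=
        (Fin.sum_univ_eq_sum_range (fun j => ∫ u in Set.Ioc (s j) (s (j + 1)), G u) m).symm
    _ = ∑ i, w i * c i := by
        exact Finset.sum_congr rfl fun i _ => (key i).symm

lemma myStrata {n : ℕ} (hn : 0 < n) {G : ℝ → ℝ} (hG : Measurable G)
    {C : ℝ} (hC : ∀ x, |G x| ≤ C) :
    ∑ i : Fin n, ∫ u in Set.Ioc (((i : ℕ) : ℝ) / n) (((i : ℕ) + 1 : ℝ) / n), G u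
      = ∫ u in Set.Ioc (0 : ℝ) 1, G u := by
  have hn' : (0 : ℝ) < n := Nat.cast_pos.mpr hn
  set s : ℕ → ℝ := fun j => (j : ℝ) / n with hs
  have hmono : ∀ j, s j ≤ s (j + 1) := by
    intro j
    rw [div_le_div_iff_of_pos_right hn']
    push_cast
    linarith
  have h0 : s 0 = 0 := by simp [hs]
  have h1 : s n = 1 := by
    simp only [hs]
    exact div_self hn'.ne'
  calc ∑ i : Fin n, ∫ u in Set.Ioc (((i : ℕ) : ℝ) / n) (((i : ℕ) + 1 : ℝ) / n), G u
      = ∑ i : Fin n, ∫ u in Set.Ioc (s (i : ℕ)) (s ((i : ℕ) + 1)), G u := by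
        refine Finset.sum_congr rfl fun i _ => ?_
        simp only [hs]
        push_cast
        ring_nf
    _ = ∑ j ∈ Finset.range n, ∫ u in Set.Ioc (s j) (s (j + 1)), G u :=
        Fin.sum_univ_eq_sum_range (fun j => ∫ u in Set.Ioc (s j) (s (j + 1)), G u) n
    _ = ∫ u in Set.Ioc (0 : ℝ) 1, G u := mySumPartition hG hC s hmono h0 h1

/-- the variance of the stratified resampling estimator is no larger than
that of multinomial resampling, namely `(1/n){∑_i w i f(ξ i)² − (∑_i w i f(ξ i))²}`. -/
theorem stratified_le_multinomial_variance
    {X : Type*} [MeasurableSpace X] {Ω : Type*} [MeasurableSpace Ω]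
    (P : Measure Ω) [IsProbabilityMeasure P]
    (m n : ℕ) (hm : 0 < m) (hn : 0 < n)
    (ξ : Fin m → X) (f : X → ℝ) (hf : Measurable f) (hfb : ∃ C, ∀ x, |f x| ≤ C)
    (w : Fin m → ℝ) (hw : ∀ i, 0 ≤ w i) (hw1 : ∑ i, w i = 1)
    (Dinv : ℝ → Fin m) (hDmeas : Measurable Dinv)
    (hDinv : ∀ (u : ℝ) (i : Fin m),
      u ∈ Set.Ioc (∑ j ∈ Finset.Iio i, w j) (∑ j ∈ Finset.Iic i, w j) → Dinv u = i)
    (U : Fin n → Ω → ℝ) (hUmeas : ∀ i, Measurable (U i))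
    (hUindep : iIndepFun U P)
    (hUlaw : ∀ i : Fin n, Measure.map (U i) P
      = (n : ENNReal) • volume.restrict (Set.Ioc (((i : ℕ) : ℝ) / n) (((i : ℕ) + 1 : ℝ) / n))) :
    variance (fun a => (1 / (n : ℝ)) * ∑ i : Fin n, f (ξ (Dinv (U i a)))) P
      ≤ (1 / (n : ℝ)) *
        ((∑ i, w i * f (ξ i) ^ 2) - (∑ i, w i * f (ξ i)) ^ 2) := by
  classical
  obtain ⟨C, hC⟩ := hfb
  set g : ℝ → ℝ := fun u => f (ξ (Dinv u)) with hgdef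
  have hg : Measurable g := hf.comp ((Measurable.of_discrete (f := ξ)).comp hDmeas)
  have hgb : ∀ x, |g x| ≤ C := fun x => hC _
  have hg2 : Measurable (fun u => g u ^ 2) := hg.pow_const 2
  have hg2b : ∀ x, |g x ^ 2| ≤ C ^ 2 := fun x => by
    rw [abs_pow]
    exact pow_le_pow_left₀ (abs_nonneg _) (hgb x) 2
  set Y : Fin n → Ω → ℝ := fun i a => g (U i a) with hYdef
  have hYmeas : ∀ i, Measurable (Y i) := fun i => hg.comp (hUmeas i)
  have hYmem : ∀ i, MemLp (Y i) 2 P := fun i =>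
    MemLp.of_bound (hYmeas i).aestronglyMeasurable C
      (ae_of_all _ fun a => by simpa using hgb (U i a))
  have hn' : (0 : ℝ) < n := Nat.cast_pos.mpr hn
  set S1 : ℝ := ∑ i, w i * f (ξ i) with hS1
  set S2 : ℝ := ∑ i, w i * f (ξ i) ^ 2 with hS2
  -- per-stratum moments
  have hmom : ∀ (i : Fin n) (G : ℝ → ℝ), Measurable G →
      (∫ a, G (U i a) ∂P)
        = (n : ℝ) * ∫ u in Set.Ioc (((i : ℕ) : ℝ) / n) (((i : ℕ) + 1 : ℝ) / n), G u := by
    intro i G hGm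
    rw [← integral_map (hUmeas i).aemeasurable hGm.aestronglyMeasurable, hUlaw i,
      integral_smul_measure]
    simp
  -- integrals over (0,1]
  have hI1 : ∫ u in Set.Ioc (0 : ℝ) 1, g u = S1 :=
    myWeights w hw hw1 hg hgb _ (fun u i hu => by
      simp only [hgdef]; rw [hDinv u i hu])
  have hI2 : (∫ u in Set.Ioc (0 : ℝ) 1, g u ^ 2) = S2 :=
    myWeights w hw hw1 hg2 hg2b _ (fun u i hu => by
      simp only [hgdef]; rw [hDinv u i hu])
  -- sums of moments over strata
  have hsum1 : ∑ i : Fin n, (∫ a, Y i a ∂P) = (n : ℝ) * S1 := by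
    calc ∑ i : Fin n, (∫ a, Y i a ∂P)
        = ∑ i : Fin n, (n : ℝ) *
            ∫ u in Set.Ioc (((i : ℕ) : ℝ) / n) (((i : ℕ) + 1 : ℝ) / n), g u :=
          Finset.sum_congr rfl fun i _ => hmom i g hg
      _ = (n : ℝ) * ∑ i : Fin n,
            ∫ u in Set.Ioc (((i : ℕ) : ℝ) / n) (((i : ℕ) + 1 : ℝ) / n), g u := by
          rw [Finset.mul_sum]
      _ = (n : ℝ) * S1 := by rw [myStrata hn hg hgb, hI1]
  have hsum2 : ∑ i : Fin n, (∫ a, Y i a ^ 2 ∂P) = (n : ℝ) * S2 := by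
    calc ∑ i : Fin n, (∫ a, Y i a ^ 2 ∂P)
        = ∑ i : Fin n, (n : ℝ) *
            ∫ u in Set.Ioc (((i : ℕ) : ℝ) / n) (((i : ℕ) + 1 : ℝ) / n), g u ^ 2 :=
          Finset.sum_congr rfl fun i _ => hmom i (fun u => g u ^ 2) hg2
      _ = (n : ℝ) * ∑ i : Fin n,
            ∫ u in Set.Ioc (((i : ℕ) : ℝ) / n) (((i : ℕ) + 1 : ℝ) / n), g u ^ 2 := by
          rw [Finset.mul_sum]
      _ = (n : ℝ) * S2 := by rw [myStrata hn hg2 hg2b, hI2]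
  -- variance decomposition
  have hvarsum : variance (fun a => ∑ i : Fin n, Y i a) P
      = ∑ i : Fin n, variance (Y i) P := by
    have hfun : (∑ i : Fin n, Y i) = fun a => ∑ i : Fin n, Y i a := by
      funext a; simp
    rw [← hfun]
    exact IndepFun.variance_sum (fun i _ => hYmem i)
      (fun i _ j _ hij => (hUindep.indepFun hij).comp hg hg)
  have hvar_each : ∀ i : Fin n,
      variance (Y i) P = (∫ a, Y i a ^ 2 ∂P) - (∫ a, Y i a ∂P) ^ 2 := by
    intro i
    rw [variance_eq_sub (hYmem i)]
    congr 1
  -- Cauchy-Schwarz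
  have hCS : ((n : ℝ) * S1) ^ 2 ≤ (n : ℝ) * ∑ i : Fin n, (∫ a, Y i a ∂P) ^ 2 := by
    have h := sq_sum_le_card_mul_sum_sq (s := (Finset.univ : Finset (Fin n)))
      (f := fun i : Fin n => ∫ a, Y i a ∂P)
    rw [hsum1] at h
    simpa using h
  -- put everything together
  have hrw : (fun a => (1 / (n : ℝ)) * ∑ i : Fin n, f (ξ (Dinv (U i a))))
      = fun a => (1 / (n : ℝ)) * ∑ i : Fin n, Y i a := rfl
  rw [hrw, variance_const_mul, hvarsum]
  have hsplit : ∑ i : Fin n, variance (Y i) P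
      = (n : ℝ) * S2 - ∑ i : Fin n, (∫ a, Y i a ∂P) ^ 2 := by
    rw [Finset.sum_congr rfl fun i _ => hvar_each i, Finset.sum_sub_distrib, hsum2]
  rw [hsplit]
  have hB : (n : ℝ) * S1 ^ 2 ≤ ∑ i : Fin n, (∫ a, Y i a ∂P) ^ 2 := by
    nlinarith [hCS, hn']
  have hfinal : (1 / (n : ℝ)) ^ 2 * ((n : ℝ) * S2 - ∑ i : Fin n, (∫ a, Y i a ∂P) ^ 2)
      ≤ (1 / (n : ℝ)) * (S2 - S1 ^ 2) := by
    have h1 : (1 / (n : ℝ)) ^ 2 > 0 := by positivity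
    have h2 : (1 / (n : ℝ)) ^ 2 * ((n : ℝ) * S2 - ∑ i : Fin n, (∫ a, Y i a ∂P) ^ 2)
        ≤ (1 / (n : ℝ)) ^ 2 * ((n : ℝ) * S2 - (n : ℝ) * S1 ^ 2) := by
      apply mul_le_mul_of_nonneg_left _ h1.le
      linarith
    refine h2.trans (le_of_eq ?_)
    field_simp
  exact hfinal
end

section
/- Let m, n be positive integers, ξ_1,…,ξ_m points of a measurable space X, f : X → ℝ bounded measurable, and ω_1,…,ω_m nonnegative real weights with Σ_{i=1}^m ω_i = 1. Let D_ω^inv(u) = i for u ∈ ( Σ_{j=1}^{i−1} ω_j , Σ_{j=1}^{i} ω_j ]. Let U be a single random variable uniformly distributed on (0, 1/n], and set U^i = (i−1)/n + U for i = 1,…,n. Then systematic resampling is unbiased: E[ Σ_{i=1}^n f(ξ_{D_ω^inv(U^i)}) ] = n Σ_{i=1}^m ω_i f(ξ_i). -/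
open MeasureTheory ProbabilityTheory Filter Finset

/-- unbiasedness of systematic resampling.
`U` is a single uniform draw on `(0, 1/n]`, `U^i = (i−1)/n + U`, and indices are selected
through the inverse cdf `Dinv` of the weights; then
`E[∑_i f(ξ_{Dinv(U^i)})] = n ∑_i w i f(ξ i)`. -/
theorem systematic_resampling_unbiased
    {X : Type*} [MeasurableSpace X] {Ω : Type*} [MeasurableSpace Ω]
    (P : Measure Ω) [IsProbabilityMeasure P]
    (m n : ℕ) (hm : 0 < m) (hn : 0 < n)
    (ξ : Fin m → X) (f : X → ℝ) (hf : Measurable f) (hfb : ∃ C, ∀ x, |f x| ≤ C)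
    (w : Fin m → ℝ) (hw : ∀ i, 0 ≤ w i) (hw1 : ∑ i, w i = 1)
    (Dinv : ℝ → Fin m) (hDmeas : Measurable Dinv)
    (hDinv : ∀ (u : ℝ) (i : Fin m),
      u ∈ Set.Ioc (∑ j ∈ Finset.Iio i, w j) (∑ j ∈ Finset.Iic i, w j) → Dinv u = i)
    (U : Ω → ℝ) (hUmeas : Measurable U)
    (hUlaw : Measure.map U P
      = (n : ENNReal) • volume.restrict (Set.Ioc (0 : ℝ) (1 / n))) :
    ∫ a, ∑ i : Fin n, f (ξ (Dinv (((i : ℕ) : ℝ) / n + U a))) ∂P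
      = n * ∑ i, w i * f (ξ i) := by
  obtain ⟨C, hC⟩ := hfb
  set g : ℝ → ℝ := fun u => f (ξ (Dinv u)) with hgdef
  have hg : Measurable g := hf.comp ((measurable_of_countable ξ).comp hDmeas)
  have hgb : ∀ u, ‖g u‖ ≤ C := fun u => by simpa [Real.norm_eq_abs] using hC (ξ (Dinv u))
  have hnR : (0:ℝ) < n := by exact_mod_cast hn
  -- interval integrability of g everywhere
  have hii : ∀ a b : ℝ, IntervalIntegrable g volume a b := by
    intro a b
    constructor <;>
      exact Measure.integrableOn_of_bounded measure_Ioc_lt_top.ne hg.aestronglyMeasurable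
        (ae_of_all _ hgb)
  -- key: for each shift c, E[g (c + U)] = n * ∫ in c..c+1/n, g
  have key : ∀ c : ℝ, ∫ a, g (c + U a) ∂P = n * ∫ u in c..(c + 1/n), g u := by
    intro c
    have hmeas : Measurable fun u : ℝ => g (c + u) := hg.comp (measurable_const_add c)
    rw [← integral_map hUmeas.aemeasurable hmeas.aestronglyMeasurable, hUlaw,
      integral_smul_measure]
    rw [← intervalIntegral.integral_of_le (by positivity : (0:ℝ) ≤ 1/n),
      intervalIntegral.integral_comp_add_left g c, add_zero]
    simp [smul_eq_mul]
  -- integrability of each summand over P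
  have hint : ∀ c : ℝ, Integrable (fun a => g (c + U a)) P := by
    intro c
    exact ⟨((hg.comp (measurable_const_add c)).comp hUmeas).aestronglyMeasurable,
      HasFiniteIntegral.of_bounded (C := C) (ae_of_all _ fun a => hgb _)⟩
  calc ∫ a, ∑ i : Fin n, f (ξ (Dinv (((i : ℕ) : ℝ) / n + U a))) ∂P
      = ∑ i : Fin n, ∫ a, g (((i : ℕ) : ℝ) / n + U a) ∂P :=
        integral_finset_sum _ fun i _ => hint _
    _ = ∑ i : Fin n, (n : ℝ) * ∫ u in (((i:ℕ):ℝ)/n)..((((i:ℕ):ℝ)+1)/n), g u := by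
        refine Finset.sum_congr rfl fun i _ => ?_
        rw [key]
        congr 1
        field_simp
    _ = (n : ℝ) * ∑ k ∈ Finset.range n, ∫ u in ((k:ℝ)/n)..(((k:ℝ)+1)/n), g u := by
        rw [← Finset.mul_sum, Fin.sum_univ_eq_sum_range (fun k => ∫ u in ((k:ℝ)/n)..(((k:ℝ)+1)/n), g u)]
    _ = (n : ℝ) * ∫ u in (0:ℝ)..1, g u := by
        congr 1
        have := intervalIntegral.sum_integral_adjacent_intervals
          (a := fun k : ℕ => (k:ℝ)/n) (μ := volume) (f := g) (n := n)
          (fun k _ => hii _ _)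
        simpa [Nat.cast_zero, div_self hnR.ne'] using this
    _ = (n : ℝ) * ∑ i, w i * f (ξ i) := by
        congr 1
        -- partial sums of weights
        set wn : ℕ → ℝ := fun k => if h : k < m then w ⟨k, h⟩ else 0 with hwn
        set b : ℕ → ℝ := fun k => ∑ l ∈ Finset.range k, wn l with hb
        have hb0 : b 0 = 0 := by simp [hb]
        have hbm : b m = 1 := by
          simp only [hb]
          rw [← hw1, ← Fin.sum_univ_eq_sum_range wn]
          exact Finset.sum_congr rfl fun i _ => by simp [hwn]
        have hbIio : ∀ (j : Fin m), b (j : ℕ) = ∑ l ∈ Finset.Iio j, w l := by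
          intro j
          simp only [hb]
          rw [← Nat.Iio_eq_range, ← Fin.map_valEmbedding_Iio, Finset.sum_map]
          exact Finset.sum_congr rfl fun l _ => by
            simp [hwn, Fin.valEmbedding_apply, l.isLt]
        have hbIic : ∀ (j : Fin m), b ((j : ℕ) + 1) = ∑ l ∈ Finset.Iic j, w l := by
          intro j
          have h0 := hbIio j
          simp only [hb] at h0 ⊢
          rw [Finset.sum_range_succ, h0, ← Finset.Iio_insert,
            Finset.sum_insert (by simp)]
          simp [hwn, j.isLt, add_comm]
        have hterm : ∀ k (hk : k < m),
            ∫ u in (b k)..(b (k+1)), g u = w ⟨k, hk⟩ * f (ξ ⟨k, hk⟩) := by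
          intro k hk
          have hδ : b (k+1) = b k + w ⟨k, hk⟩ := by
            simp [hb, Finset.sum_range_succ, hwn, hk]
          have hle : b k ≤ b (k+1) := by rw [hδ]; linarith [hw ⟨k, hk⟩]
          rw [intervalIntegral.integral_of_le hle]
          have hcongr : ∀ u ∈ Set.Ioc (b k) (b (k+1)), g u = f (ξ ⟨k, hk⟩) := by
            intro u hu
            have : Dinv u = ⟨k, hk⟩ := by
              apply hDinv
              rw [← hbIio ⟨k, hk⟩, ← hbIic ⟨k, hk⟩]
              exact hu
            simp [hgdef, this]
          rw [setIntegral_congr_fun measurableSet_Ioc hcongr]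
          rw [setIntegral_const, measureReal_def, Real.volume_Ioc, hδ]
          rw [ENNReal.toReal_ofReal (by linarith [hw ⟨k, hk⟩]), smul_eq_mul]
          ring
        have hadj := intervalIntegral.sum_integral_adjacent_intervals
          (a := b) (μ := volume) (f := g) (n := m) (fun k _ => hii _ _)
        rw [hb0, hbm] at hadj
        rw [← hadj]
        rw [← Fin.sum_univ_eq_sum_range
          (fun k => ∫ u in (b k)..(b (k+1)), g u)]
        refine Finset.sum_congr rfl fun i _ => ?_
        rw [hterm i i.isLt]
end

section
/- Consider the interleaved two-value configuration: n is an even positive integer, x_0 and x_1 are two points, the n particles are ξ_i = x_0 for odd i and ξ_i = x_1 for even i, with weights ω_i = 2(1−ω)/n for odd i and ω_i = 2ω/n for even i, where 1/2 ≤ ω < 1, and f is a real-valued function on {x_0, x_1}. Let D_ω^inv(u) = i for u ∈ ( Σ_{j=1}^{i−1} ω_j , Σ_{j=1}^{i} ω_j ], and let U^1,…,U^n be independent with U^i uniform on ((i−1)/n, i/n] (stratified resampling). Then Var[ (1/n) Σ_{i=1}^n f(ξ_{D_ω^inv(U^i)}) ] = (1/n) (2ω − 1)(1 − ω) (f(x_1)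 − f(x_0))². -/
open MeasureTheory ProbabilityTheory Filter Finset

lemma sum_range_ite_even_aux (V : ℝ) (m : ℕ) :
    ∑ i ∈ Finset.range (2 * m), (if i % 2 = 0 then V else 0) = m * V := by
  induction m with
  | zero => simp
  | succ m ih =>
    have h : 2 * (m + 1) = (2 * m) + 1 + 1 := by ring
    rw [h, Finset.sum_range_succ, Finset.sum_range_succ, ih]
    have h1 : (2 * m) % 2 = 0 := by omega
    have h2 : (2 * m + 1) % 2 = 1 := by omega
    rw [h1, h2]
    push_cast
    simp
    ring

lemma integral_Ioc_piecewise (φ : ℝ → ℝ) (a c b c0 c1 : ℝ) (hac : a ≤ c) (hcb : c ≤ b)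
    (h0 : ∀ u ∈ Set.Ioc a c, φ u = c0) (h1 : ∀ u ∈ Set.Ioc c b, φ u = c1) :
    ∫ u in Set.Ioc a b, φ u = (c - a) * c0 + (b - c) * c1 := by
  rw [← Set.Ioc_union_Ioc_eq_Ioc hac hcb,
    setIntegral_union (Set.Ioc_disjoint_Ioc_of_le le_rfl) measurableSet_Ioc]
  · rw [setIntegral_congr_fun measurableSet_Ioc h0,
      setIntegral_congr_fun measurableSet_Ioc h1, setIntegral_const, setIntegral_const,
      measureReal_def, measureReal_def, Real.volume_Ioc, Real.volume_Ioc, ENNReal.toReal_ofReal (by linarith),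
      ENNReal.toReal_ofReal (by linarith)]
    simp [smul_eq_mul]
  · exact (integrableOn_const (by simp [Real.volume_Ioc])).congr_fun
      (fun u hu => (h0 u hu).symm) measurableSet_Ioc
  · exact (integrableOn_const (by simp [Real.volume_Ioc])).congr_fun
      (fun u hu => (h1 u hu).symm) measurableSet_Ioc

/-- stratified resampling in the interleaved two-value configuration.
Particles with 0-based index `i` are `x0` for `i` even (paper's odd 1-based indices) and
`x1` for `i` odd, carrying weights `2(1−ω)/n` and `2ω/n` respectively, `1/2 ≤ ω < 1`.
For stratified resampling, `Var[(1/n) ∑_i f(ξ_{Dinv(U i)})]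
  = (1/n)(2ω − 1)(1 − ω)(f(x1) − f(x0))²`. -/
theorem stratified_variance_interleaved
    {X : Type*} [MeasurableSpace X] {Ω : Type*} [MeasurableSpace Ω]
    (P : Measure Ω) [IsProbabilityMeasure P]
    (n : ℕ) (hn : 0 < n) (hneven : Even n)
    (x0 x1 : X) (f : X → ℝ)
    (ω : ℝ) (hω1 : 1 / 2 ≤ ω) (hω2 : ω < 1)
    (ξ : Fin n → X) (hξ : ∀ i, ξ i = if (i : ℕ) % 2 = 0 then x0 else x1)
    (w : Fin n → ℝ)
    (hwdef : ∀ i, w i = if (i : ℕ) % 2 = 0 then 2 * (1 - ω) / n else 2 * ω / n)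
    (Dinv : ℝ → Fin n) (hDmeas : Measurable Dinv)
    (hDinv : ∀ (u : ℝ) (i : Fin n),
      u ∈ Set.Ioc (∑ j ∈ Finset.Iio i, w j) (∑ j ∈ Finset.Iic i, w j) → Dinv u = i)
    (U : Fin n → Ω → ℝ) (hUmeas : ∀ i, Measurable (U i))
    (hUindep : iIndepFun U P)
    (hUlaw : ∀ i : Fin n, Measure.map (U i) P
      = (n : ENNReal) • volume.restrict (Set.Ioc (((i : ℕ) : ℝ) / n) (((i : ℕ) + 1 : ℝ) / n))) :
    variance (fun a => (1 / (n : ℝ)) * ∑ i : Fin n, f (ξ (Dinv (U i a)))) P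
      = (1 / (n : ℝ)) * (2 * ω - 1) * (1 - ω) * (f x1 - f x0) ^ 2 := by
  have hn' : (0 : ℝ) < n := Nat.cast_pos.2 hn
  have hnne : (n : ℝ) ≠ 0 := ne_of_gt hn'
  -- the deterministic selection function
  set g : ℝ → ℝ := fun u => f (ξ (Dinv u)) with hgdef
  have hgm : Measurable g := (measurable_of_finite (fun j : Fin n => f (ξ j))).comp hDmeas
  -- partial sums of weights over ℕ
  set W : ℕ → ℝ := fun m => if m % 2 = 0 then 2 * (1 - ω) / n else 2 * ω / n with hW
  have hSW : ∀ m : ℕ, ∑ j ∈ Finset.range m, W j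
      = ((m : ℝ) + if m % 2 = 0 then 0 else 1 - 2 * ω) / n := by
    intro m
    induction m with
    | zero => simp
    | succ m ih =>
      rw [Finset.sum_range_succ, ih]
      rcases Nat.even_or_odd m with hm | hm
      · have h1 : m % 2 = 0 := Nat.even_iff.mp hm
        have h2 : (m + 1) % 2 = 1 := by omega
        simp only [hW, h1, h2, if_pos rfl]
        norm_num
        push_cast
        field_simp
        ring
      · have h1 : m % 2 = 1 := Nat.odd_iff.mp hm
        have h2 : (m + 1) % 2 = 0 := by omega
        simp only [hW, h1, h2]
        norm_num
        push_cast
        field_simp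
        ring
  -- sums over Fin intervals
  have himgIio : ∀ i : Fin n, ∑ j ∈ Finset.Iio i, w j = ∑ m ∈ Finset.range i.val, W m := by
    intro i
    have himg : Finset.image Fin.val (Finset.Iio i) = Finset.range i.val := by
      ext m
      simp only [Finset.mem_image, Finset.mem_Iio, Finset.mem_range]
      constructor
      · rintro ⟨j, hj, rfl⟩; exact hj
      · intro hm; exact ⟨⟨m, lt_trans hm i.isLt⟩, hm, rfl⟩
    rw [← himg, Finset.sum_image (fun a _ b _ h => Fin.val_injective h)]
    exact Finset.sum_congr rfl (fun j _ => hwdef j)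
  have himgIic : ∀ i : Fin n, ∑ j ∈ Finset.Iic i, w j = ∑ m ∈ Finset.range (i.val + 1), W m := by
    intro i
    have himg : Finset.image Fin.val (Finset.Iic i) = Finset.range (i.val + 1) := by
      ext m
      simp only [Finset.mem_image, Finset.mem_Iic, Finset.mem_range, Nat.lt_succ_iff]
      constructor
      · rintro ⟨j, hj, rfl⟩; exact hj
      · intro hm; exact ⟨⟨m, lt_of_le_of_lt hm i.isLt⟩, hm, rfl⟩
    rw [← himg, Finset.sum_image (fun a _ b _ h => Fin.val_injective h)]
    exact Finset.sum_congr rfl (fun j _ => hwdef j)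
  -- value of g on strata
  have hgodd : ∀ i : Fin n, (i : ℕ) % 2 = 1 →
      ∀ u ∈ Set.Ioc (((i : ℕ) : ℝ) / n) ((((i : ℕ) : ℝ) + 1) / n), g u = f x1 := by
    intro i hi u hu
    have hD : Dinv u = i := by
      apply hDinv
      have h2 : ((i : ℕ) + 1) % 2 = 0 := by omega
      rw [himgIio i, himgIic i, hSW, hSW, hi, h2, if_neg one_ne_zero, if_pos rfl]
      constructor
      · exact lt_of_le_of_lt ((div_le_div_iff_of_pos_right hn').mpr (by linarith)) hu.1
      · refine hu.2.trans (le_of_eq ?_)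
        push_cast
        ring
    rw [hgdef]
    simp only
    rw [hD, hξ i, if_neg (by omega)]
  have hgeven0 : ∀ i : Fin n, (i : ℕ) % 2 = 0 →
      ∀ u ∈ Set.Ioc (((i : ℕ) : ℝ) / n) ((((i : ℕ) : ℝ) + 2 * (1 - ω)) / n), g u = f x0 := by
    intro i hi u hu
    have hD : Dinv u = i := by
      apply hDinv
      have h2 : ((i : ℕ) + 1) % 2 = 1 := by omega
      rw [himgIio i, himgIic i, hSW, hSW, hi, h2, if_pos rfl, if_neg one_ne_zero]
      constructor
      · simpa using hu.1
      · refine hu.2.trans (le_of_eq ?_)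
        push_cast
        ring
    rw [hgdef]
    simp only
    rw [hD, hξ i, if_pos hi]
  have hgeven1 : ∀ i : Fin n, (i : ℕ) % 2 = 0 →
      ∀ u ∈ Set.Ioc ((((i : ℕ) : ℝ) + 2 * (1 - ω)) / n) ((((i : ℕ) : ℝ) + 1) / n),
        g u = f x1 := by
    intro i hi u hu
    have hlt : (i : ℕ) + 1 < n := by
      obtain ⟨m, hm⟩ := hneven
      have := i.isLt
      omega
    set t : Fin n := ⟨(i : ℕ) + 1, hlt⟩ with ht
    have hD : Dinv u = t := by
      apply hDinv
      have htv : (t : ℕ) = (i : ℕ) + 1 := rfl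
      have h1 : ((i : ℕ) + 1) % 2 = 1 := by omega
      have h2 : ((i : ℕ) + 1 + 1) % 2 = 0 := by omega
      rw [himgIio t, himgIic t, hSW, hSW, htv, h1, h2, if_neg one_ne_zero, if_pos rfl]
      constructor
      · refine lt_of_le_of_lt (le_of_eq ?_) hu.1
        push_cast
        ring
      · refine hu.2.trans ((div_le_div_iff_of_pos_right hn').mpr ?_)
        push_cast
        linarith
    rw [hgdef]
    simp only
    rw [hD, hξ t, if_neg (by simp only [ht]; omega)]
  -- the post-composition variables
  set Y : Fin n → Ω → ℝ := fun i => g ∘ U i with hY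
  have hYm : ∀ i, Measurable (Y i) := fun i => hgm.comp (hUmeas i)
  have hgval : ∀ u, g u = f x0 ∨ g u = f x1 := by
    intro u
    rw [hgdef]
    simp only
    rw [hξ (Dinv u)]
    split
    · exact Or.inl rfl
    · exact Or.inr rfl
  have hmem : ∀ i, MemLp (Y i) 2 P := by
    intro i
    refine MemLp.of_bound (hYm i).aestronglyMeasurable (max ‖f x0‖ ‖f x1‖) (ae_of_all _ ?_)
    intro a
    rcases hgval (U i a) with h | h <;>
      simp only [hY, Function.comp_apply, h]
    · exact le_max_left _ _
    · exact le_max_right _ _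
  -- transfer integrals to the real line
  have hint : ∀ (i : Fin n) (φ : ℝ → ℝ), Measurable φ →
      ∫ a, φ (U i a) ∂P
        = (n : ℝ) * ∫ u in Set.Ioc (((i : ℕ) : ℝ) / n) ((((i : ℕ) : ℝ) + 1) / n), φ u := by
    intro i φ hφ
    rw [← integral_map (hUmeas i).aemeasurable hφ.aestronglyMeasurable, hUlaw i,
      integral_smul_measure]
    simp [smul_eq_mul]
  -- variance of each Y i
  have hVar : ∀ i : Fin n, variance (Y i) P
      = if (i : ℕ) % 2 = 0 then (2 * ω - 1) * (2 * (1 - ω)) * (f x1 - f x0) ^ 2 else 0 := by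
    intro i
    rw [variance_eq_sub (hmem i)]
    have e2 : (Y i ^ 2) = fun a => (fun u => (g u) ^ 2) (U i a) := by
      funext a
      simp [hY]
    have e1 : (Y i) = fun a => g (U i a) := rfl
    rw [e2, e1, hint i _ hgm, hint i _ (hgm.pow_const 2)]
    rcases Nat.even_or_odd (i : ℕ) with hpar | hpar
    · have hi : (i : ℕ) % 2 = 0 := Nat.even_iff.mp hpar
      rw [if_pos hi]
      have hac : ((i : ℕ) : ℝ) / n ≤ (((i : ℕ) : ℝ) + 2 * (1 - ω)) / n :=
        (div_le_div_iff_of_pos_right hn').mpr (by linarith)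
      have hcb : (((i : ℕ) : ℝ) + 2 * (1 - ω)) / n ≤ (((i : ℕ) : ℝ) + 1) / n :=
        (div_le_div_iff_of_pos_right hn').mpr (by linarith)
      rw [integral_Ioc_piecewise g _ _ _ (f x0) (f x1) hac hcb (hgeven0 i hi) (hgeven1 i hi),
        integral_Ioc_piecewise (fun u => (g u) ^ 2) _ _ _ ((f x0) ^ 2) ((f x1) ^ 2) hac hcb
          (fun u hu => by simp only [hgeven0 i hi u hu]) (fun u hu => by simp only [hgeven1 i hi u hu])]
      field_simp
      ring
    · have hi : (i : ℕ) % 2 = 1 := Nat.odd_iff.mp hpar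
      rw [if_neg (by omega)]
      have hab : ((i : ℕ) : ℝ) / n ≤ (((i : ℕ) : ℝ) + 1) / n :=
        (div_le_div_iff_of_pos_right hn').mpr (by linarith)
      rw [integral_Ioc_piecewise g _ _ _ (f x1) (f x1) le_rfl hab
          (fun u hu => absurd hu (by simp)) (hgodd i hi),
        integral_Ioc_piecewise (fun u => (g u) ^ 2) _ _ _ ((f x1) ^ 2) ((f x1) ^ 2) le_rfl hab
          (fun u hu => absurd hu (by simp)) (fun u hu => by simp only [hgodd i hi u hu])]
      field_simp
      ring
  -- independence and the sum
  have hindep : iIndepFun Y P :=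
    hUindep.comp (fun _ => g) (fun _ => hgm)
  have hsum : variance (∑ i : Fin n, Y i) P = ∑ i : Fin n, variance (Y i) P :=
    IndepFun.variance_sum (fun i _ => hmem i) (fun i _ j _ hij => hindep.indepFun hij)
  have hfn : (fun a => (1 / (n : ℝ)) * ∑ i : Fin n, f (ξ (Dinv (U i a))))
      = (1 / (n : ℝ)) • (∑ i : Fin n, Y i) := by
    funext a
    simp only [Pi.smul_apply, Finset.sum_apply, smul_eq_mul, hY, Function.comp_apply, hgdef]
  rw [hfn, variance_smul, hsum]
  simp only [hVar]
  rw [Fin.sum_univ_eq_sum_range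
    (fun m => if m % 2 = 0 then (2 * ω - 1) * (2 * (1 - ω)) * (f x1 - f x0) ^ 2 else 0)]
  obtain ⟨m, hm⟩ := hneven
  have hm2 : n = 2 * m := by omega
  have hmpos : 0 < m := by omega
  rw [hm2, sum_range_ite_even_aux]
  have hmne : (m : ℝ) ≠ 0 := Nat.cast_ne_zero.2 (by omega)
  push_cast
  field_simp
end

section
/- Consider the interleaved two-value configuration: n is an even positive integer, x_0 and x_1 are two points, the n particles are ξ_i = x_0 for odd i and ξ_i = x_1 for even i, with weights ω_i = 2(1−ω)/n for odd i and ω_i = 2ω/n for even i, where 1/2 ≤ ω < 1, and f is a real-valued function on {x_0, x_1}. Let D_ω^inv(u) = i for u ∈ ( Σ_{j=1}^{i−1} ω_j , Σ_{j=1}^{i} ω_j ], let U be uniform on (0, 1/n], and set U^i = (i−1)/n + U (systematic resampling). Then Var[ (1/n) Σ_{i=1}^n f(ξ_{D_ω^inv(U^i)}) ] = (ω − 1/2)(1 − ω) (f(x_1) − f(x_0))², a quantity that does not depend on n. -/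
open MeasureTheory ProbabilityTheory Filter Finset

lemma aux_sum_alt (A B : ℝ) : ∀ m : ℕ,
    ∑ j ∈ Finset.range (2*m), (if j % 2 = 0 then A else B) = m * (A + B) := by
  intro m
  induction m with
  | zero => simp
  | succ k ih =>
    have h : 2 * (k+1) = (2*k) + 1 + 1 := by ring
    rw [h, Finset.sum_range_succ, Finset.sum_range_succ, ih]
    have h1 : (2*k) % 2 = 0 := by omega
    have h2 : (2*k+1) % 2 ≠ 0 := by omega
    rw [if_pos h1, if_neg h2]
    push_cast
    ring

lemma aux_variance_congr {Ω : Type*} {m : MeasurableSpace Ω} {X Y : Ω → ℝ} {μ : Measure Ω}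
    (h : X =ᵐ[μ] Y) : variance X μ = variance Y μ := by
  have hint : μ[X] = μ[Y] := integral_congr_ae h
  unfold ProbabilityTheory.variance ProbabilityTheory.evariance
  rw [hint]
  congr 1
  apply lintegral_congr_ae
  filter_upwards [h] with a ha
  rw [ha]

lemma aux_fin_Iio_sum {n : ℕ} (i : Fin n) (v : ℕ → ℝ) :
    ∑ j ∈ Finset.Iio i, v (j : ℕ) = ∑ j ∈ Finset.range (i : ℕ), v j := by
  rw [show (Finset.range (i:ℕ)) = Finset.Iio (i:ℕ) from by rw [Nat.Iio_eq_range], ← Fin.map_valEmbedding_Iio, Finset.sum_map]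
  rfl

lemma aux_Iio_sum (n : ℕ) (ω : ℝ) (w : Fin n → ℝ)
    (hwdef : ∀ i, w i = if (i : ℕ) % 2 = 0 then 2 * (1 - ω) / n else 2 * ω / n)
    (i : Fin n) :
    ∑ j ∈ Finset.Iio i, w j
      = if (i : ℕ) % 2 = 0 then (i : ℝ) / n else ((i : ℝ) + 1 - 2 * ω) / n := by
  have hw : ∀ j : Fin n, w j
      = (fun k : ℕ => if k % 2 = 0 then 2 * (1 - ω) / n else 2 * ω / n) (j : ℕ) :=
    fun j => hwdef j
  calc ∑ j ∈ Finset.Iio i, w j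
      = ∑ j ∈ Finset.range (i : ℕ),
          (if j % 2 = 0 then 2 * (1 - ω) / n else 2 * ω / n) := by
        rw [Finset.sum_congr rfl fun j _ => hw j]
        exact aux_fin_Iio_sum i (fun k => if k % 2 = 0 then 2 * (1 - ω) / n else 2 * ω / n)
    _ = _ := by
        rcases Nat.even_or_odd (i : ℕ) with he | ho
        · obtain ⟨m, hm⟩ := he
          have h2 : (i : ℕ) = 2 * m := by omega
          rw [h2, aux_sum_alt, if_pos (show (2 * m) % 2 = 0 from by omega)]
          push_cast; ring
        · obtain ⟨m, hm⟩ := ho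
          have h2 : (i : ℕ) = 2 * m + 1 := by omega
          rw [h2, Finset.sum_range_succ, aux_sum_alt,
            if_pos (show (2 * m) % 2 = 0 from by omega),
            if_neg (show (2 * m + 1) % 2 ≠ 0 from by omega)]
          push_cast; ring

lemma aux_Iic_sum (n : ℕ) (ω : ℝ) (w : Fin n → ℝ)
    (hwdef : ∀ i, w i = if (i : ℕ) % 2 = 0 then 2 * (1 - ω) / n else 2 * ω / n)
    (i : Fin n) :
    ∑ j ∈ Finset.Iic i, w j
      = if (i : ℕ) % 2 = 0 then ((i : ℝ) + 2 - 2 * ω) / n else ((i : ℝ) + 1) / n := by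
  rw [← Finset.Iio_insert, Finset.sum_insert (by simp), aux_Iio_sum n ω w hwdef, hwdef]
  rcases Nat.decEq ((i : ℕ) % 2) 0 with h | h
  · rw [if_neg h, if_neg h, if_neg h]; ring
  · rw [if_pos h, if_pos h, if_pos h]; ring

/-- systematic resampling in the interleaved two-value configuration.
Particles with 0-based index `i` are `x0` for `i` even (paper's odd 1-based indices) and
`x1` for `i` odd, carrying weights `2(1−ω)/n` and `2ω/n` respectively, `1/2 ≤ ω < 1`.
A single uniform `U` on `(0, 1/n]` gives `U^i = (i−1)/n + U`, and
`Var[(1/n) ∑_i f(ξ_{Dinv(U^i)})] = (ω − 1/2)(1 − ω)(f(x1) − f(x0))²`,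
a quantity that does not depend on `n`. -/
theorem systematic_variance_interleaved
    {X : Type*} [MeasurableSpace X] {Ω : Type*} [MeasurableSpace Ω]
    (P : Measure Ω) [IsProbabilityMeasure P]
    (n : ℕ) (hn : 0 < n) (hneven : Even n)
    (x0 x1 : X) (f : X → ℝ)
    (ω : ℝ) (hω1 : 1 / 2 ≤ ω) (hω2 : ω < 1)
    (ξ : Fin n → X) (hξ : ∀ i, ξ i = if (i : ℕ) % 2 = 0 then x0 else x1)
    (w : Fin n → ℝ)
    (hwdef : ∀ i, w i = if (i : ℕ) % 2 = 0 then 2 * (1 - ω) / n else 2 * ω / n)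
    (Dinv : ℝ → Fin n) (hDmeas : Measurable Dinv)
    (hDinv : ∀ (u : ℝ) (i : Fin n),
      u ∈ Set.Ioc (∑ j ∈ Finset.Iio i, w j) (∑ j ∈ Finset.Iic i, w j) → Dinv u = i)
    (U : Ω → ℝ) (hUmeas : Measurable U)
    (hUlaw : Measure.map U P
      = (n : ENNReal) • volume.restrict (Set.Ioc (0 : ℝ) (1 / n))) :
    variance (fun a => (1 / (n : ℝ)) *
        ∑ i : Fin n, f (ξ (Dinv (((i : ℕ) : ℝ) / n + U a)))) P
      = (ω - 1 / 2) * (1 - ω) * (f x1 - f x0) ^ 2 := by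
  have hn0 : (0:ℝ) < n := by exact_mod_cast hn
  have hn0' : (n:ℝ) ≠ 0 := ne_of_gt hn0
  set t : ℝ := 2 * (1 - ω) / n with ht_def
  have hω0 : 0 < 1 - ω := by linarith
  have ht0 : 0 < t := by rw [ht_def]; positivity
  have htn : t ≤ 1 / n := by
    rw [ht_def, div_le_div_iff₀ hn0 hn0]; nlinarith
  -- pointwise identification on the support of U
  have hpoint : ∀ a : Ω, U a ∈ Set.Ioc (0:ℝ) (1/n) →
      (1 / (n : ℝ)) * ∑ i : Fin n, f (ξ (Dinv (((i : ℕ) : ℝ) / n + U a)))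
        = (if U a ≤ t then (f x0 + f x1)/2 else f x1) := by
    intro a ha
    obtain ⟨hu0, hun⟩ := ha
    have hterm : ∀ i : Fin n, f (ξ (Dinv (((i : ℕ) : ℝ) / n + U a)))
        = if (i : ℕ) % 2 = 0 then (if U a ≤ t then f x0 else f x1) else f x1 := by
      intro i
      have hin : ((i:ℕ):ℝ) ≥ 0 := by positivity
      by_cases hpar : (i : ℕ) % 2 = 0
      · rw [if_pos hpar]
        by_cases hut : U a ≤ t
        · rw [if_pos hut]
          have hD : Dinv (((i : ℕ) : ℝ) / n + U a) = i := by
            apply hDinv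
            rw [aux_Iio_sum n ω w hwdef i, aux_Iic_sum n ω w hwdef i,
              if_pos hpar, if_pos hpar]
            have he : (((i:ℕ):ℝ) + 2 - 2*ω)/n = ((i:ℕ):ℝ)/n + t := by
              rw [ht_def]; ring
            constructor
            · linarith
            · rw [he]; linarith
          rw [hD, hξ i, if_pos hpar]
        · rw [if_neg hut]
          have hlt : (i:ℕ) + 1 < n := by
            obtain ⟨m, hm⟩ := hneven
            have := i.isLt
            omega
          have hjodd : (((⟨(i:ℕ)+1, hlt⟩ : Fin n) : ℕ)) % 2 ≠ 0 := by
            simp only []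
            omega
          have hD : Dinv (((i : ℕ) : ℝ) / n + U a) = ⟨(i:ℕ)+1, hlt⟩ := by
            apply hDinv
            rw [aux_Iio_sum n ω w hwdef _, aux_Iic_sum n ω w hwdef _,
              if_neg hjodd, if_neg hjodd]
            have hjv : (((⟨(i:ℕ)+1, hlt⟩ : Fin n) : ℕ) : ℝ) = ((i:ℕ):ℝ) + 1 := by
              push_cast
              rfl
            rw [hjv]
            have he : (((i:ℕ):ℝ) + 1 + 1 - 2*ω)/n = ((i:ℕ):ℝ)/n + t := by
              rw [ht_def]; ring
            have he2 : (((i:ℕ):ℝ) + 1 + 1)/n = ((i:ℕ):ℝ)/n + 1/n + 1/n := by ring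
            have h1n : 0 < 1/(n:ℝ) := by positivity
            constructor
            · rw [he]; linarith [not_le.mp hut]
            · rw [he2]; linarith
          rw [hD, hξ _, if_neg hjodd]
      · rw [if_neg hpar]
        have hD : Dinv (((i : ℕ) : ℝ) / n + U a) = i := by
          apply hDinv
          rw [aux_Iio_sum n ω w hwdef i, aux_Iic_sum n ω w hwdef i,
            if_neg hpar, if_neg hpar]
          have he : (((i:ℕ):ℝ) + 1 - 2*ω)/n ≤ ((i:ℕ):ℝ)/n := by
            rw [div_le_div_iff₀ hn0 hn0]
            nlinarith [hin, hn0.le]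
          have he2 : (((i:ℕ):ℝ) + 1)/n = ((i:ℕ):ℝ)/n + 1/n := by ring
          constructor
          · linarith
          · rw [he2]; linarith
        rw [hD, hξ i, if_neg hpar]
    rw [Finset.sum_congr rfl fun i _ => hterm i,
      Fin.sum_univ_eq_sum_range
        (fun k => if k % 2 = 0 then (if U a ≤ t then f x0 else f x1) else f x1) n]
    obtain ⟨m, hm⟩ := hneven
    have h2m : n = 2 * m := by omega
    have hm0 : (0:ℝ) < m := by
      have : 0 < m := by omega
      exact_mod_cast this
    subst h2m
    rw [aux_sum_alt]
    by_cases hut : U a ≤ t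
    · rw [if_pos hut, if_pos hut]
      push_cast
      field_simp
    · rw [if_neg hut, if_neg hut]
      push_cast
      field_simp
      ring
  -- almost sure support
  have hsupp : ∀ᵐ a ∂P, U a ∈ Set.Ioc (0:ℝ) (1/n) := by
    rw [ae_iff]
    have hset : {a | ¬ U a ∈ Set.Ioc (0:ℝ) (1/n)} = U ⁻¹' (Set.Ioc (0:ℝ) (1/n))ᶜ := rfl
    rw [hset, ← Measure.map_apply hUmeas measurableSet_Ioc.compl, hUlaw,
      Measure.smul_apply, Measure.restrict_apply measurableSet_Ioc.compl,
      Set.compl_inter_self]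
    simp
  have hae : (fun a => (1 / (n : ℝ)) *
        ∑ i : Fin n, f (ξ (Dinv (((i : ℕ) : ℝ) / n + U a))))
      =ᵐ[P] (fun a => if U a ≤ t then (f x0 + f x1)/2 else f x1) := by
    filter_upwards [hsupp] with a ha using hpoint a ha
  rw [aux_variance_congr hae]
  have hInt : ∀ b c : ℝ, ∫ a, (if U a ≤ t then b else c) ∂P
      = b * (2*(1-ω)) + c * (2*ω-1) := by
    intro b c
    have hg : Measurable (fun u : ℝ => if u ≤ t then b else c) :=
      Measurable.ite measurableSet_Iic measurable_const measurable_const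
    have h1 : ∫ a, (if U a ≤ t then b else c) ∂P
        = ∫ u, (if u ≤ t then b else c) ∂(Measure.map U P) :=
      (integral_map hUmeas.aemeasurable hg.aestronglyMeasurable).symm
    rw [h1, hUlaw, integral_smul_measure]
    have hIOn1 : IntegrableOn (fun u : ℝ => if u ≤ t then b else c) (Set.Ioc 0 t) volume :=
      (integrableOn_const measure_Ioc_lt_top.ne).congr_fun
        (fun u hu => (if_pos hu.2).symm) measurableSet_Ioc
    have hIOn2 : IntegrableOn (fun u : ℝ => if u ≤ t then b else c) (Set.Ioc t (1/n)) volume :=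
      (integrableOn_const measure_Ioc_lt_top.ne).congr_fun
        (fun u hu => (if_neg (not_le.mpr hu.1)).symm) measurableSet_Ioc
    rw [show Set.Ioc (0:ℝ) (1/n) = Set.Ioc 0 t ∪ Set.Ioc t (1/n) from
        (Set.Ioc_union_Ioc_eq_Ioc ht0.le htn).symm,
      setIntegral_union (Set.Ioc_disjoint_Ioc_of_le le_rfl) measurableSet_Ioc hIOn1 hIOn2,
      setIntegral_congr_fun measurableSet_Ioc (fun u hu => if_pos hu.2),
      setIntegral_congr_fun measurableSet_Ioc (fun u hu => if_neg (not_le.mpr hu.1)),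
      setIntegral_const, setIntegral_const, Real.volume_real_Ioc_of_le (by linarith),
      Real.volume_real_Ioc_of_le (by linarith)]
    simp only [smul_eq_mul, ENNReal.toReal_natCast]
    rw [ht_def]
    field_simp
    ring
  have hmem : MemLp (fun a => if U a ≤ t then (f x0 + f x1)/2 else f x1) 2 P := by
    apply MemLp.of_bound
      (Measurable.ite (hUmeas measurableSet_Iic) measurable_const
        measurable_const).aestronglyMeasurable
      (|(f x0 + f x1)/2| + |f x1|)
    apply ae_of_all
    intro a
    simp only [Set.mem_Iic, Real.norm_eq_abs]
    by_cases h : U a ≤ t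
    · rw [if_pos h]
      linarith [abs_nonneg (f x1), le_abs_self ((f x0 + f x1)/2), abs_nonneg ((f x0 + f x1)/2)]
    · rw [if_neg h]
      linarith [abs_nonneg ((f x0 + f x1)/2)]
  rw [variance_eq_sub hmem]
  have hsq : (fun a => if U a ≤ t then (f x0 + f x1)/2 else f x1) ^ 2
      = fun a => if U a ≤ t then ((f x0 + f x1)/2)^2 else (f x1)^2 := by
    funext a
    simp only [Pi.pow_apply]
    split_ifs <;> ring
  rw [hsq, hInt, hInt]
  ring
end

section
/- (Lemma 1.) Let X be a measurable space with σ-finite reference measure λ, ν and μ probability densities on X with g = μ/ν bounded from above. For each m, let ξ^{m,1},…,ξ^{m,m} be X-valued random variables such that for every bounded measurable h, (1/m) Σ_{i=1}^m h(ξ^{m,i}) → ν(h) in probability, and set ω^{m,i} = g(ξ^{m,i}) / Σ_{j=1}^m g(ξ^{m,j}). Let n = n(m) → ∞ with n/m → α ∈ (0,∞), and assume the support condition μ( { x : α g(x) ∈ ℕ } ) = 0, i.e. ∫ 1_{ { x : α μ(x)/ν(x) ∈ ℕ } }(x) μ(x) λ(dx) = 0. Then for every bounded measurable f : X → ℝ,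 Σ_{i=1}^m (⌊n ω^{m,i}⌋ / n) f(ξ^{m,i}) → ∫ (1/α) ⌊α g(x)⌋ f(x) ν(x) λ(dx) in probability as m → ∞. -/
open MeasureTheory ProbabilityTheory Filter Finset
open scoped ENNReal Topology

set_option maxHeartbeats 1000000

lemma floor_cast_diff_le {u v : ℝ} : |(⌊u⌋ : ℝ) - (⌊v⌋ : ℝ)| ≤ |u - v| + 1 := by
  have h1 : (⌊u⌋ : ℝ) ≤ u := Int.floor_le u
  have h2 : u < ⌊u⌋ + 1 := Int.lt_floor_add_one u
  have h3 : (⌊v⌋ : ℝ) ≤ v := Int.floor_le v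
  have h4 : v < ⌊v⌋ + 1 := Int.lt_floor_add_one v
  have h5 : u - v ≤ |u - v| := le_abs_self _
  have h6 : -(|u - v|) ≤ u - v := neg_abs_le _
  rw [abs_le]; constructor <;> linarith

lemma exists_nat_near {u v : ℝ} (hu : 0 ≤ u) (hv : 0 ≤ v) (hne : ⌊u⌋ ≠ ⌊v⌋) :
    ∃ k : ℕ, 1 ≤ k ∧ |v - (k : ℝ)| ≤ |u - v| := by
  have hu0 : (0 : ℤ) ≤ ⌊u⌋ := Int.floor_nonneg.mpr hu
  have hv0 : (0 : ℤ) ≤ ⌊v⌋ := Int.floor_nonneg.mpr hv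
  rcases hne.lt_or_gt with h | h
  · refine ⟨⌊v⌋.toNat, ?_, ?_⟩
    · omega
    · have hk : ((⌊v⌋.toNat : ℤ) : ℝ) = ((⌊v⌋ : ℤ) : ℝ) := by norm_cast; omega
      push_cast at hk ⊢
      rw [hk]
      have h3 : (⌊v⌋ : ℝ) ≤ v := Int.floor_le v
      have h2 : u < ⌊u⌋ + 1 := Int.lt_floor_add_one u
      have hle : (⌊u⌋ : ℝ) + 1 ≤ (⌊v⌋ : ℝ) := by exact_mod_cast h
      rw [abs_of_nonneg (by linarith), abs_of_nonpos (by linarith)]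
      linarith
  · refine ⟨⌊u⌋.toNat, ?_, ?_⟩
    · omega
    · have hk : ((⌊u⌋.toNat : ℤ) : ℝ) = ((⌊u⌋ : ℤ) : ℝ) := by norm_cast; omega
      push_cast at hk ⊢
      rw [hk]
      have h3 : (⌊u⌋ : ℝ) ≤ u := Int.floor_le u
      have h2 : v < ⌊v⌋ + 1 := Int.lt_floor_add_one v
      have hle : (⌊v⌋ : ℝ) + 1 ≤ (⌊u⌋ : ℝ) := by exact_mod_cast h
      rw [abs_of_nonpos (by linarith), abs_of_nonneg (by linarith)]
      linarith

lemma aux_pointwise (m nn : ℕ) (hm : 1 ≤ m) (hn : 1 ≤ nn)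
    (α C Cf η τ ε₁ c ε L' Iη : ℝ)
    (hα : 0 < α) (hC : 1 ≤ C) (hCf : 0 < Cf) (hη2 : η ≤ 1/2)
    (hτ1 : τ ≤ 1/2) (hτ2 : τ ≤ α/2) (hτ3 : 2*τ*(1+α)*C ≤ η)
    (hτ4 : 2*τ/α^2*|L'| ≤ ε/4)
    (hIb : 3*Cf/α*(Iη + c) ≤ ε/2)
    (hε₁ : 2/α*ε₁ ≤ ε/4)
    (gi fi bi : Fin m → ℝ)
    (hgi0 : ∀ i, 0 ≤ gi i) (hgiC : ∀ i, gi i ≤ C) (hfi : ∀ i, |fi i| ≤ Cf)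
    (hbi01 : ∀ i, bi i = 0 ∨ bi i = 1)
    (hbi_spec : ∀ i, (∃ k : ℕ, 1 ≤ k ∧ |α * gi i - (k:ℝ)| ≤ η) → bi i = 1)
    (hr : |(nn:ℝ)/m - α| < τ)
    (hT : |1/(m:ℝ) * ∑ i, gi i - 1| < τ)
    (hH : |1/(m:ℝ) * ∑ i, (⌊α * gi i⌋:ℝ) * fi i - L'| < ε₁)
    (hI : |1/(m:ℝ) * ∑ i, bi i - Iη| < c) :
    |∑ i, ((⌊(nn:ℝ) * (gi i / ∑ j, gi j)⌋:ℝ)/(nn:ℝ)) * fi i - 1/α * L'| < ε := by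
  have hm0 : (0:ℝ) < m := by exact_mod_cast hm
  have hn0 : (0:ℝ) < nn := by exact_mod_cast hn
  have hτpos : 0 < τ := lt_of_le_of_lt (abs_nonneg _) hr
  set S := ∑ i, gi i with hSdef
  set T := 1/(m:ℝ) * S with hTdef
  have hThalf : (1:ℝ)/2 ≤ T := by have := abs_lt.mp hT; linarith
  have hTpos : 0 < T := by linarith
  have hSeq : S = m * T := by rw [hTdef]; field_simp
  have hSpos : 0 < S := by rw [hSeq]; positivity
  set r := (nn:ℝ)/m with hrdef
  have hr2 : α/2 ≤ r := by have := abs_lt.mp hr; linarith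
  have hrpos : 0 < r := by linarith
  set β := (nn:ℝ)/S with hβdef
  have hβ0 : 0 ≤ β := by positivity
  have hβ : β = r / T := by
    rw [hβdef, hrdef, hTdef]; field_simp
  have hβα : |β - α| ≤ 2*τ*(1+α) := by
    have h1 : |r - α*T| ≤ τ + α*τ := by
      have e : r - α*T = (r - α) + (-α)*(T - 1) := by ring
      have := abs_lt.mp hr
      have := abs_lt.mp hT
      calc |r - α*T| = |(r-α) + (-α)*(T-1)| := by rw [e]
        _ ≤ |r-α| + |(-α)*(T-1)| := abs_add_le _ _
        _ = |r-α| + α*|T-1| := by rw [abs_mul, abs_neg, abs_of_pos hα]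
        _ ≤ τ + α*τ := by
            have h' : |T-1| ≤ τ := hT.le
            have h'' : |r-α| ≤ τ := hr.le
            nlinarith
    have e2 : β - α = (r - α*T)/T := by rw [hβ]; field_simp
    rw [e2, abs_div, abs_of_pos hTpos, div_le_iff₀ hTpos]
    have hx : 0 ≤ (τ*(1+α)) * (2*T - 1) :=
      mul_nonneg (mul_nonneg hτpos.le (by linarith)) (by linarith)
    nlinarith [hx]
  have hb0 : ∀ i, 0 ≤ bi i := by
    intro i; rcases hbi01 i with h | h <;> rw [h] <;> norm_num
  have key : ∀ i ∈ Finset.univ (α := Fin m),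
      |((⌊(nn:ℝ) * (gi i / S)⌋:ℝ) - (⌊α * gi i⌋:ℝ))| * |fi i| ≤ 3/2 * Cf * bi i := by
    intro i _
    have hu_eq : (nn:ℝ) * (gi i / S) = β * gi i := by
      rw [hβdef, ← mul_div_assoc, div_mul_eq_mul_div]
    have huv : |β * gi i - α * gi i| ≤ η := by
      have e : |β*gi i - α*gi i| = |β - α| * gi i := by
        rw [← sub_mul, abs_mul, abs_of_nonneg (hgi0 i)]
      rw [e]
      calc |β-α| * gi i ≤ (2*τ*(1+α)) * C := by
            apply mul_le_mul hβα (hgiC i) (hgi0 i) (by positivity)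
        _ = 2*τ*(1+α)*C := by ring
        _ ≤ η := hτ3
    by_cases hfl : ⌊(nn:ℝ) * (gi i / S)⌋ = ⌊α * gi i⌋
    · rw [hfl, sub_self, abs_zero, zero_mul]
      have := hb0 i; positivity
    · have hbi1 : bi i = 1 := by
        apply hbi_spec
        rw [hu_eq] at hfl
        obtain ⟨k, hk1, hk2⟩ := exists_nat_near (u := β*gi i) (v := α*gi i)
          (by have := hgi0 i; positivity) (by have := hgi0 i; positivity) hfl
        exact ⟨k, hk1, hk2.trans huv⟩
      rw [hbi1, mul_one]
      have h1 : |(⌊(nn:ℝ)*(gi i/S)⌋:ℝ) - (⌊α*gi i⌋:ℝ)| ≤ |β*gi i - α*gi i| + 1 := by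
        rw [hu_eq]; exact floor_cast_diff_le
      have h2 : |(⌊(nn:ℝ)*(gi i/S)⌋:ℝ) - (⌊α*gi i⌋:ℝ)| ≤ 3/2 := by linarith
      exact mul_le_mul h2 (hfi i) (abs_nonneg _) (by norm_num)
    
  set A := ∑ i, ((⌊(nn:ℝ) * (gi i / S)⌋:ℝ)/(nn:ℝ)) * fi i with hAdef
  set H := 1/(m:ℝ) * ∑ i, (⌊α * gi i⌋:ℝ) * fi i with hHdef
  set I := 1/(m:ℝ) * ∑ i, bi i with hIdef
  have hInn : 0 ≤ I := by
    rw [hIdef]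
    exact mul_nonneg (by positivity) (Finset.sum_nonneg fun i _ => hb0 i)
  have hrinv : 1/r ≤ 2/α := by
    rw [div_le_div_iff₀ hrpos hα]; nlinarith
  have hstep1 : |A - 1/r * H| ≤ 3*Cf/α * I := by
    have h1 : A = 1/(nn:ℝ) * ∑ i, (⌊(nn:ℝ)*(gi i/S)⌋:ℝ) * fi i := by
      rw [hAdef, Finset.mul_sum]
      exact Finset.sum_congr rfl fun i _ => by ring
    have h2 : 1/r * H = 1/(nn:ℝ) * ∑ i, (⌊α*gi i⌋:ℝ) * fi i := by
      rw [hHdef, hrdef]; field_simp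
    have e : A - 1/r * H
        = 1/(nn:ℝ) * ∑ i, ((⌊(nn:ℝ)*(gi i/S)⌋:ℝ) - (⌊α*gi i⌋:ℝ)) * fi i := by
      rw [h1, h2, ← mul_sub, ← Finset.sum_sub_distrib]
      congr 1
      exact Finset.sum_congr rfl fun i _ => by ring
    rw [e, abs_mul, abs_of_pos (by positivity : (0:ℝ) < 1/(nn:ℝ))]
    have hsum : |∑ i, ((⌊(nn:ℝ)*(gi i/S)⌋:ℝ) - (⌊α*gi i⌋:ℝ)) * fi i|
        ≤ ∑ i, 3/2 * Cf * bi i := by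
      calc |∑ i, ((⌊(nn:ℝ)*(gi i/S)⌋:ℝ) - (⌊α*gi i⌋:ℝ)) * fi i|
          ≤ ∑ i, |((⌊(nn:ℝ)*(gi i/S)⌋:ℝ) - (⌊α*gi i⌋:ℝ)) * fi i| :=
            Finset.abs_sum_le_sum_abs _ _
        _ ≤ ∑ i, 3/2 * Cf * bi i := by
            apply Finset.sum_le_sum
            intro i hi
            rw [abs_mul]
            exact key i hi
    have hsum2 : (∑ i, 3/2 * Cf * bi i) = 3/2 * Cf * (m * I) := by
      rw [hIdef, ← Finset.mul_sum]; field_simp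
    calc 1/(nn:ℝ) * |∑ i, ((⌊(nn:ℝ)*(gi i/S)⌋:ℝ) - (⌊α*gi i⌋:ℝ)) * fi i|
        ≤ 1/(nn:ℝ) * (3/2 * Cf * (m * I)) := by
          rw [← hsum2]
          exact mul_le_mul_of_nonneg_left hsum (by positivity)
      _ = 3/2 * Cf * I * (1/r) := by rw [hrdef]; field_simp
      _ ≤ 3/2 * Cf * I * (2/α) := by
          have ha : (0:ℝ) ≤ 3/2 * Cf * I := mul_nonneg (by positivity) hInn
          exact mul_le_mul_of_nonneg_left hrinv ha
      _ = 3*Cf/α * I := by field_simp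
  have hI2 : I < Iη + c := by have := abs_lt.mp hI; linarith
  have t1 : |A - 1/r * H| < ε/2 := by
    have h3 : 3*Cf/α * I < 3*Cf/α * (Iη + c) :=
      mul_lt_mul_of_pos_left hI2 (by positivity)
    linarith
  have hε₁pos : 0 < ε₁ := lt_of_le_of_lt (abs_nonneg _) hH
  have t2 : 1/r * |H - L'| < ε/4 := by
    have h1 : 1/r * |H - L'| ≤ 2/α * |H - L'| :=
      mul_le_mul_of_nonneg_right hrinv (abs_nonneg _)
    have h2 : 2/α * |H - L'| < 2/α * ε₁ :=
      mul_lt_mul_of_pos_left hH (by positivity)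
    linarith
  have t3 : |1/r - 1/α| * |L'| ≤ ε/4 := by
    have h0 : |1/r - 1/α| ≤ 2*τ/α^2 := by
      have e : 1/r - 1/α = (α - r)/(r*α) := by field_simp
      rw [e, abs_div, abs_of_pos (mul_pos hrpos hα), div_le_iff₀ (mul_pos hrpos hα)]
      have h1 : |α - r| ≤ τ := by rw [abs_sub_comm]; exact hr.le
      have h2 : 2*τ/α^2 * (r*α) = 2*τ*r/α := by field_simp
      rw [h2]
      have h3 : τ ≤ 2*τ*r/α := by
        rw [le_div_iff₀ hα]; nlinarith
      linarith
    calc |1/r - 1/α| * |L'| ≤ 2*τ/α^2 * |L'| :=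
        mul_le_mul_of_nonneg_right h0 (abs_nonneg _)
      _ ≤ ε/4 := hτ4
  have tri : |A - 1/α * L'| ≤ |A - 1/r*H| + 1/r * |H - L'| + |1/r - 1/α| * |L'| := by
    have e : A - 1/α*L' = (A - 1/r*H) + (1/r*(H - L')) + ((1/r - 1/α)*L') := by ring
    rw [e]
    calc |(A - 1/r*H) + (1/r*(H - L')) + ((1/r - 1/α)*L')|
        ≤ |(A - 1/r*H) + (1/r*(H - L'))| + |(1/r - 1/α)*L'| := abs_add_le _ _
      _ ≤ |A - 1/r*H| + |1/r*(H - L')| + |(1/r - 1/α)*L'| := by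
          have := abs_add_le (A - 1/r*H) (1/r*(H - L'))
          linarith
      _ = |A - 1/r*H| + 1/r * |H - L'| + |1/r - 1/α| * |L'| := by
          rw [abs_mul, abs_mul, abs_of_pos (by positivity : (0:ℝ) < 1/r)]
  linarith

/-- Lemma 1: limit of sums involving the integer parts `⌊n ω^{m,i}⌋`
appearing in residual resampling.  Under the support condition
`μ({x : α g(x) ∈ ℕ}) = 0` (with `g = μ/ν` bounded) and `n/m → α`,
`∑_i (⌊n ω^{m,i}⌋/n) f(ξ^{m,i}) → ν{(1/α)⌊α μ/ν⌋ f}` in probability. -/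
theorem residual_floor_sum_limit
    {X : Type*} [MeasurableSpace X] (lam : Measure X) [SigmaFinite lam]
    {Ω : Type*} [MeasurableSpace Ω] (P : Measure Ω) [IsProbabilityMeasure P]
    (nu mu : X → ℝ) (hnu_meas : Measurable nu) (hmu_meas : Measurable mu)
    (hnu_nonneg : ∀ x, 0 ≤ nu x) (hmu_nonneg : ∀ x, 0 ≤ mu x)
    (hnu_int : ∫ x, nu x ∂lam = 1) (hmu_int : ∫ x, mu x ∂lam = 1)
    (hg_bdd : ∃ C, ∀ x, mu x / nu x ≤ C)
    (ξ : (m : ℕ) → Fin m → Ω → X) (hξ : ∀ m i, Measurable (ξ m i))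
    (hLLN : ∀ h : X → ℝ, Measurable h → (∃ C, ∀ x, |h x| ≤ C) →
      TendstoInMeasure P (fun (m : ℕ) (a : Ω) => (1 / (m : ℝ)) * ∑ i, h (ξ m i a)) atTop
        (fun _ => ∫ x, h x * nu x ∂lam))
    (n : ℕ → ℕ) (hn : Tendsto n atTop atTop)
    (α : ℝ) (hα : 0 < α)
    (hnm : Tendsto (fun m : ℕ => (n m : ℝ) / m) atTop (nhds α))
    (hsupport : ∫ x in {x | ∃ k : ℕ, α * (mu x / nu x) = (k : ℝ)}, mu x ∂lam = 0)
    (f : X → ℝ) (hf : Measurable f) (hfb : ∃ C, ∀ x, |f x| ≤ C) :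
    TendstoInMeasure P
      (fun (m : ℕ) (a : Ω) => ∑ i,
        ((⌊(n m : ℝ) * (mu (ξ m i a) / nu (ξ m i a)
            / ∑ j, mu (ξ m j a) / nu (ξ m j a))⌋ : ℝ) / (n m : ℝ)) * f (ξ m i a)) atTop
      (fun _ => ∫ x, (1 / α) * (⌊α * (mu x / nu x)⌋ : ℝ) * f x * nu x ∂lam) := by
  classical
  obtain ⟨C₀, hC₀⟩ := hg_bdd
  obtain ⟨Cf₀, hCf₀⟩ := hfb
  set C : ℝ := max C₀ 1 with hCdef
  have hC1 : (1:ℝ) ≤ C := le_max_right _ _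
  set Cf : ℝ := max Cf₀ 0 + 1 with hCfdef
  have hCf : 0 < Cf := by
    have : (0:ℝ) ≤ max Cf₀ 0 := le_max_right _ _
    linarith
  have hCfb : ∀ x, |f x| ≤ Cf := fun x =>
    (hCf₀ x).trans (by have := le_max_left Cf₀ (0:ℝ); linarith)
  set g : X → ℝ := fun x => mu x / nu x with hgdef
  have hg_meas : Measurable g := hmu_meas.div hnu_meas
  have hg0 : ∀ x, 0 ≤ g x := fun x => div_nonneg (hmu_nonneg x) (hnu_nonneg x)
  have hgC : ∀ x, g x ≤ C := fun x => (hC₀ x).trans (le_max_left _ _)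
  have hmu_i : Integrable mu lam := by
    by_contra h; rw [MeasureTheory.integral_undef h] at hmu_int; norm_num at hmu_int
  have hnu_i : Integrable nu lam := by
    by_contra h; rw [MeasureTheory.integral_undef h] at hnu_int; norm_num at hnu_int
  set Sset : Set X := {x | ∃ k : ℕ, α * g x = (k:ℝ)} with hSsetdef
  have hSset_meas : MeasurableSet Sset := by
    have he : Sset = ⋃ k : ℕ, {x | α * g x = (k:ℝ)} := by
      ext x; simp [hSsetdef, Set.mem_iUnion]
    rw [he]
    exact MeasurableSet.iUnion fun k =>
      measurableSet_eq_fun (measurable_const.mul hg_meas) measurable_const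
  have hzero : ∀ A : Set X, MeasurableSet A → A ⊆ Sset →
      ∫ x, Set.indicator A mu x ∂lam = 0 := by
    intro A hA hAS
    have h1 : Integrable (Set.indicator A mu) lam := hmu_i.indicator hA
    have h2 : Integrable (Set.indicator Sset mu) lam := hmu_i.indicator hSset_meas
    have hmono : ∀ x, Set.indicator A mu x ≤ Set.indicator Sset mu x := by
      intro x; by_cases hx : x ∈ A
      · rw [Set.indicator_of_mem hx, Set.indicator_of_mem (hAS hx)]
      · rw [Set.indicator_of_notMem hx]
        exact Set.indicator_nonneg (fun y _ => hmu_nonneg y) x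
    have hup := MeasureTheory.integral_mono h1 h2 hmono
    have hS0 : ∫ x, Set.indicator Sset mu x ∂lam = 0 := by
      rw [MeasureTheory.integral_indicator hSset_meas]; exact hsupport
    have hlow : 0 ≤ ∫ x, Set.indicator A mu x ∂lam :=
      MeasureTheory.integral_nonneg fun x => Set.indicator_nonneg (fun y _ => hmu_nonneg y) x
    linarith
  have hgnu : ∫ x, g x * nu x ∂lam = 1 := by
    have hA : MeasurableSet {x : X | nu x = 0} :=
      measurableSet_eq_fun hnu_meas measurable_const
    have hsub : {x : X | nu x = 0} ⊆ Sset := by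
      intro x hx
      refine ⟨0, ?_⟩
      have hx' : nu x = 0 := hx
      simp [hgdef, hx']
    have h0 : ∫ x, Set.indicator {x : X | nu x = 0} mu x ∂lam = 0 := hzero _ hA hsub
    have heq : ∀ x, g x * nu x = mu x - Set.indicator {x : X | nu x = 0} mu x := by
      intro x
      by_cases hx : nu x = 0
      · have hxm : x ∈ {x : X | nu x = 0} := hx
        rw [Set.indicator_of_mem hxm]
        simp [hgdef, hx]
      · have hxm : x ∉ {x : X | nu x = 0} := hx
        rw [Set.indicator_of_notMem hxm]
        simp only [hgdef]
        rw [div_mul_cancel₀ _ hx]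
        ring
    calc ∫ x, g x * nu x ∂lam
        = ∫ x, (mu x - Set.indicator {x : X | nu x = 0} mu x) ∂lam := by
          congr 1; funext x; exact heq x
      _ = (∫ x, mu x ∂lam) - ∫ x, Set.indicator {x : X | nu x = 0} mu x ∂lam :=
          MeasureTheory.integral_sub hmu_i (hmu_i.indicator hA)
      _ = 1 := by rw [hmu_int, h0]; ring
  set B : ℝ → Set X := fun η => {x | ∃ k : ℕ, 1 ≤ k ∧ |α * g x - (k:ℝ)| ≤ η} with hBdef
  have hB_meas : ∀ η, MeasurableSet (B η) := by
    intro η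
    have he : B η = ⋃ k : ℕ, ⋃ _ : 1 ≤ k, {x | |α * g x - (k:ℝ)| ≤ η} := by
      ext x; simp [hBdef, Set.mem_iUnion]
    rw [he]
    refine MeasurableSet.iUnion fun k => MeasurableSet.iUnion fun _ => ?_
    exact measurableSet_le ((measurable_const.mul hg_meas).sub measurable_const).abs
      measurable_const
  have hB_anti : ∀ η1 η2 : ℝ, η1 ≤ η2 → B η1 ⊆ B η2 := by
    intro η1 η2 h x hx
    obtain ⟨k, hk1, hk2⟩ := hx
    exact ⟨k, hk1, hk2.trans h⟩
  set Binf : Set X := ⋂ k : ℕ, B (1/((k:ℝ)+2)) with hBinfdef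
  have hBinf_meas : MeasurableSet Binf := MeasurableSet.iInter fun k => hB_meas _
  have hBinf_sub : Binf ⊆ Sset := by
    intro x hx
    have hw : ∀ k : ℕ, ∃ j : ℕ, 1 ≤ j ∧ |α * g x - (j:ℝ)| ≤ 1/((k:ℝ)+2) := by
      intro k
      exact Set.mem_iInter.mp hx k
    choose w hw1 hw2 using hw
    refine ⟨w 2, ?_⟩
    by_contra hne
    have hd : 0 < |α * g x - (w 2 : ℝ)| := by
      rw [abs_pos, sub_ne_zero]; exact hne
    obtain ⟨k0, hk0⟩ := exists_nat_gt (1/|α * g x - (w 2 : ℝ)|)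
    set k := k0 + 2 with hkdef
    have hwk : (w k : ℝ) = (w 2 : ℝ) := by
      have h2 : |α * g x - (w 2 : ℝ)| ≤ 1/4 := by
        have := hw2 2; norm_num at this; linarith
      have hk' : |α * g x - (w k : ℝ)| ≤ 1/4 := by
        have h1 := hw2 k
        have h3 : 1/((k:ℝ)+2) ≤ 1/4 := by
          rw [hkdef]
          push_cast
          rw [div_le_div_iff₀ (by positivity) (by norm_num)]
          linarith [Nat.cast_nonneg (α := ℝ) k0]
        linarith
      have habs : |(w k : ℝ) - (w 2 : ℝ)| < 1 := by
        have := abs_sub_abs_le_abs_sub (α * g x - (w k:ℝ)) (α * g x - (w 2:ℝ))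
        have h4 : |(w k : ℝ) - (w 2 : ℝ)| = |(α * g x - (w 2:ℝ)) - (α * g x - (w k:ℝ))| := by
          congr 1; ring
        rw [h4]
        calc |(α * g x - (w 2:ℝ)) - (α * g x - (w k:ℝ))|
            ≤ |α * g x - (w 2:ℝ)| + |α * g x - (w k:ℝ)| := abs_sub _ _
          _ < 1 := by linarith
      have hz : |(w k : ℤ) - (w 2 : ℤ)| < 1 := by
        have : |((w k : ℤ) : ℝ) - ((w 2 : ℤ) : ℝ)| < 1 := by push_cast; exact_mod_cast habs
        exact_mod_cast this
      have : (w k : ℤ) = (w 2 : ℤ) := by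
        rcases abs_lt.mp hz with ⟨h1', h2'⟩; omega
      exact_mod_cast this
    have hsmall : 1/((k:ℝ)+2) < |α * g x - (w 2 : ℝ)| := by
      rw [div_lt_iff₀ (by positivity)]
      have h5 : 1 / |α * g x - (w 2:ℝ)| < (k0:ℝ) := hk0
      have h6 : 1 < |α * g x - (w 2:ℝ)| * ((k0:ℝ)) := by
        rw [div_lt_iff₀ hd] at h5
        linarith
      have h7 : (k0:ℝ) ≤ (k:ℝ) + 2 := by rw [hkdef]; push_cast; linarith
      nlinarith [hd]
    have := hw2 k
    rw [hwk] at this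
    linarith
  have hBinf0 : ∫ x, Set.indicator Binf mu x ∂lam = 0 := hzero Binf hBinf_meas hBinf_sub
  have hmuB : Tendsto (fun k : ℕ => ∫ x, Set.indicator (B (1/((k:ℝ)+2))) mu x ∂lam)
      atTop (𝓝 0) := by
    rw [← hBinf0]
    apply MeasureTheory.tendsto_integral_of_dominated_convergence (fun x => mu x)
    · intro k
      exact (hmu_meas.indicator (hB_meas _)).aestronglyMeasurable
    · exact hmu_i
    · intro k
      filter_upwards with x
      rw [Real.norm_eq_abs, abs_of_nonneg (Set.indicator_nonneg (fun y _ => hmu_nonneg y) x)]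
      by_cases hx : x ∈ B (1/((k:ℝ)+2))
      · rw [Set.indicator_of_mem hx]
      · rw [Set.indicator_of_notMem hx]; exact hmu_nonneg x
    · filter_upwards with x
      by_cases hx : x ∈ Binf
      · have : ∀ k : ℕ, Set.indicator (B (1/((k:ℝ)+2))) mu x = Set.indicator Binf mu x := by
          intro k
          rw [Set.indicator_of_mem hx, Set.indicator_of_mem (Set.mem_iInter.mp hx k)]
        simp_rw [this]
        exact tendsto_const_nhds
      · obtain ⟨k0, hk0⟩ : ∃ k0 : ℕ, x ∉ B (1/((k0:ℝ)+2)) := by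
          by_contra hcon
          push_neg at hcon
          exact hx (Set.mem_iInter.mpr hcon)
        rw [Set.indicator_of_notMem hx]
        apply tendsto_atTop_of_eventually_const (i₀ := k0)
        intro k hk
        have hss : B (1/((k:ℝ)+2)) ⊆ B (1/((k0:ℝ)+2)) := by
          apply hB_anti
          apply one_div_le_one_div_of_le (by positivity)
          have : (k0:ℝ) ≤ (k:ℝ) := by exact_mod_cast hk
          linarith
        rw [Set.indicator_of_notMem (fun h => hk0 (hss h))]
  -- comparison of nu and mu integrals on B η
  have hIη_le : ∀ η : ℝ, 0 < η → η ≤ 1/2 →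
      (∫ x, (if x ∈ B η then (1:ℝ) else 0) * nu x ∂lam)
        ≤ 2*α*∫ x, Set.indicator (B η) mu x ∂lam := by
    intro η hη hη2
    have key : ∀ x, (if x ∈ B η then (1:ℝ) else 0) * nu x
        ≤ 2*α*Set.indicator (B η) mu x := by
      intro x
      by_cases hx : x ∈ B η
      · rw [if_pos hx, one_mul, Set.indicator_of_mem hx]
        obtain ⟨k, hk1, hk2⟩ := hx
        have hk1' : (1:ℝ) ≤ (k:ℝ) := by exact_mod_cast hk1
        have h1 : 1 - η ≤ α * g x := by
          have := abs_le.mp hk2; linarith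
        have h2 : 1/2 ≤ α * g x := by linarith
        have hnu_ne : nu x ≠ 0 := by
          intro h0
          have : g x = 0 := by simp [hgdef, h0]
          rw [this] at h2; linarith
        have hmu_eq : mu x = g x * nu x := by
          rw [hgdef]; field_simp
        nlinarith [hnu_nonneg x, hα, hg0 x]
      · rw [if_neg hx, Set.indicator_of_notMem hx, zero_mul, mul_zero]
    have int1 : Integrable (fun x => (if x ∈ B η then (1:ℝ) else 0) * nu x) lam := by
      apply hnu_i.mono' (((Measurable.ite (hB_meas η) measurable_const
        measurable_const).mul hnu_meas).aestronglyMeasurable)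
      filter_upwards with x
      rw [Real.norm_eq_abs]
      show |(if x ∈ B η then (1:ℝ) else 0) * nu x| ≤ nu x
      split_ifs with hx
      · rw [one_mul, abs_of_nonneg (hnu_nonneg x)]
      · rw [zero_mul, abs_zero]; exact hnu_nonneg x
    have int2 : Integrable (fun x => 2*α*Set.indicator (B η) mu x) lam :=
      (hmu_i.indicator (hB_meas η)).const_mul _
    calc ∫ x, (if x ∈ B η then (1:ℝ) else 0) * nu x ∂lam
        ≤ ∫ x, 2*α*Set.indicator (B η) mu x ∂lam :=
          MeasureTheory.integral_mono int1 int2 key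
      _ = 2*α*∫ x, Set.indicator (B η) mu x ∂lam := MeasureTheory.integral_const_mul _ _
  -- LLN consequences
  set hfn : X → ℝ := fun x => (⌊α * g x⌋ : ℝ) * f x with hfndef
  have hfn_meas : Measurable hfn :=
    (measurable_from_top.comp ((measurable_const.mul hg_meas).floor)).mul hf
  have hfn_bdd : ∃ Cb, ∀ x, |hfn x| ≤ Cb := by
    refine ⟨(α*C+1)*Cf, fun x => ?_⟩
    have h1 : |(⌊α * g x⌋ : ℝ)| ≤ α*C+1 := by
      have hv0 : 0 ≤ α * g x := mul_nonneg hα.le (hg0 x)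
      have hfl0 : (0:ℝ) ≤ (⌊α * g x⌋ : ℝ) := by
        exact_mod_cast Int.floor_nonneg.mpr hv0
      rw [abs_of_nonneg hfl0]
      have := Int.floor_le (α * g x)
      have h2 : α * g x ≤ α * C := mul_le_mul_of_nonneg_left (hgC x) hα.le
      linarith
    rw [hfndef]
    simp only [abs_mul]
    exact mul_le_mul h1 (hCfb x) (abs_nonneg _) (by positivity)
  set L' : ℝ := ∫ x, hfn x * nu x ∂lam with hL'def
  have hHconv := hLLN hfn hfn_meas hfn_bdd
  have hTconv := hLLN g hg_meas ⟨C, fun x => by rw [abs_of_nonneg (hg0 x)]; exact hgC x⟩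
  rw [hgnu] at hTconv
  rw [tendstoInMeasure_iff_dist] at hHconv hTconv
  have hLeq : (∫ x, (1 / α) * (⌊α * g x⌋ : ℝ) * f x * nu x ∂lam) = 1/α * L' := by
    rw [hL'def]
    rw [← MeasureTheory.integral_const_mul]
    congr 1
    funext x
    rw [hfndef]
    ring
  -- main argument
  rw [tendstoInMeasure_iff_dist]
  intro ε hε
  rw [ENNReal.tendsto_atTop_zero]
  intro δ hδ
  have hδ3 : (0:ℝ≥0∞) < δ/3 := ENNReal.div_pos hδ.ne' (by norm_num)
  set c : ℝ := ε*α/(12*Cf) with hcdef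
  have hcpos : 0 < c := by positivity
  have hc2α : 0 < c/(2*α) := by positivity
  obtain ⟨k₀, hk₀⟩ := (hmuB.eventually (gt_mem_nhds hc2α)).exists
  set η : ℝ := 1/((k₀:ℝ)+2) with hηdef
  have hηpos : 0 < η := by positivity
  have hη2 : η ≤ 1/2 := by
    rw [hηdef, div_le_div_iff₀ (by positivity) (by norm_num)]
    have : (0:ℝ) ≤ (k₀:ℝ) := Nat.cast_nonneg _
    linarith
  set Iη : ℝ := ∫ x, (if x ∈ B η then (1:ℝ) else 0) * nu x ∂lam with hIηdef
  have hIη : Iη < c := by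
    have h1 := hIη_le η hηpos hη2
    have h2 : 2*α*∫ x, Set.indicator (B η) mu x ∂lam < 2*α*(c/(2*α)) :=
      mul_lt_mul_of_pos_left hk₀ (by positivity)
    have h3 : 2*α*(c/(2*α)) = c := by field_simp
    linarith
  have hIconv := hLLN (fun x => if x ∈ B η then (1:ℝ) else 0)
    (Measurable.ite (hB_meas η) measurable_const measurable_const)
    ⟨1, fun x => by by_cases hx : x ∈ B η <;> simp [hx]⟩
  rw [tendstoInMeasure_iff_dist] at hIconv
  set ε₁ : ℝ := ε*α/8 with hε₁def
  have hε₁pos : 0 < ε₁ := by positivity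
  set τ : ℝ := min (min (1/2) (α/2)) (min (η/(2*(1+α)*C)) (ε*α^2/(8*(|L'|+1)))) with hτdef
  have hτpos : 0 < τ := by
    apply lt_min (lt_min (by norm_num) (by positivity))
    apply lt_min
    · apply div_pos hηpos; positivity
    · positivity
  have hτ1 : τ ≤ 1/2 := le_trans (min_le_left _ _) (min_le_left _ _)
  have hτ2 : τ ≤ α/2 := le_trans (min_le_left _ _) (min_le_right _ _)
  have hτ3 : 2*τ*(1+α)*C ≤ η := by
    have h1 : τ ≤ η/(2*(1+α)*C) := le_trans (min_le_right _ _) (min_le_left _ _)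
    have hden : (0:ℝ) < 2*(1+α)*C := by positivity
    rw [le_div_iff₀ hden] at h1
    nlinarith
  have hτ4 : 2*τ/α^2*|L'| ≤ ε/4 := by
    have h1 : τ ≤ ε*α^2/(8*(|L'|+1)) := le_trans (min_le_right _ _) (min_le_right _ _)
    have hL0 : (0:ℝ) ≤ |L'| := abs_nonneg _
    have h2 : 2*τ/α^2*|L'| ≤ 2*(ε*α^2/(8*(|L'|+1)))/α^2*|L'| := by
      gcongr
    have h3 : 2*(ε*α^2/(8*(|L'|+1)))/α^2*|L'| = ε/4 * (|L'|/(|L'|+1)) := by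
      field_simp
      ring
    have h4 : |L'|/(|L'|+1) ≤ 1 := by
      rw [div_le_one (by positivity)]; linarith
    have h5 : ε/4 * (|L'|/(|L'|+1)) ≤ ε/4 := by
      nlinarith [div_nonneg hL0 (by positivity : (0:ℝ) ≤ |L'|+1)]
    linarith
  have hIb : 3*Cf/α*(Iη + c) ≤ ε/2 := by
    have h1 : Iη + c ≤ 2*c := by linarith
    have h2 : 3*Cf/α*(Iη + c) ≤ 3*Cf/α*(2*c) := by
      apply mul_le_mul_of_nonneg_left h1 (by positivity)
    have h3 : 3*Cf/α*(2*c) = ε/2 := by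
      rw [hcdef]; field_simp; ring
    linarith
  have hε₁b : 2/α*ε₁ ≤ ε/4 := by
    rw [hε₁def]; rw [div_mul_eq_mul_div, div_le_div_iff₀ hα (by norm_num)]
    ring_nf
    nlinarith [hα, hε]
  -- events
  obtain ⟨N₁, hN₁⟩ := ENNReal.tendsto_atTop_zero.mp (hTconv τ hτpos) (δ/3) hδ3
  obtain ⟨N₂, hN₂⟩ := ENNReal.tendsto_atTop_zero.mp (hHconv ε₁ hε₁pos) (δ/3) hδ3
  obtain ⟨N₃, hN₃⟩ := ENNReal.tendsto_atTop_zero.mp (hIconv c hcpos) (δ/3) hδ3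
  have hrev : ∀ᶠ m in atTop, |(n m:ℝ)/(m:ℝ) - α| < τ := by
    have := Metric.tendsto_nhds.mp hnm τ hτpos
    simpa [Real.dist_eq] using this
  have hdet : ∀ᶠ m in atTop, (|(n m:ℝ)/(m:ℝ) - α| < τ ∧ 1 ≤ m) ∧ 1 ≤ n m :=
    (hrev.and (eventually_ge_atTop 1)).and (hn.eventually_ge_atTop 1)
  obtain ⟨N₄, hN₄⟩ := eventually_atTop.mp hdet
  refine ⟨max (max N₁ N₂) (max N₃ N₄), fun m hm => ?_⟩
  have hm1 : N₁ ≤ m := le_trans (le_trans (le_max_left _ _) (le_max_left _ _)) hm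
  have hm2 : N₂ ≤ m := le_trans (le_trans (le_max_right _ _) (le_max_left _ _)) hm
  have hm3 : N₃ ≤ m := le_trans (le_trans (le_max_left _ _) (le_max_right _ _)) hm
  have hm4 : N₄ ≤ m := le_trans (le_trans (le_max_right _ _) (le_max_right _ _)) hm
  obtain ⟨⟨hdet1, hdet2⟩, hdet3⟩ := hN₄ m hm4
  -- the three bad events
  set E₁ : Set Ω := {a | τ ≤ dist ((1/(m:ℝ)) * ∑ i, g (ξ m i a)) 1} with hE₁def
  set E₂ : Set Ω := {a | ε₁ ≤ dist ((1/(m:ℝ)) * ∑ i, hfn (ξ m i a)) L'} with hE₂def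
  set E₃ : Set Ω :=
    {a | c ≤ dist ((1/(m:ℝ)) * ∑ i, (if ξ m i a ∈ B η then (1:ℝ) else 0)) Iη} with hE₃def
  have hsub : {a | ε ≤ dist (∑ i,
      ((⌊(n m : ℝ) * (mu (ξ m i a) / nu (ξ m i a)
          / ∑ j, mu (ξ m j a) / nu (ξ m j a))⌋ : ℝ) / (n m : ℝ)) * f (ξ m i a))
      (∫ x, (1 / α) * (⌊α * (mu x / nu x)⌋ : ℝ) * f x * nu x ∂lam)}
      ⊆ E₁ ∪ (E₂ ∪ E₃) := by
    intro a ha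
    by_contra hcon
    simp only [Set.mem_union, hE₁def, hE₂def, hE₃def, Set.mem_setOf_eq, not_or,
      not_le] at hcon
    obtain ⟨h1, h2, h3⟩ := hcon
    rw [Real.dist_eq] at h1 h2 h3
    have ha' : ε ≤ |∑ i,
        ((⌊(n m : ℝ) * (mu (ξ m i a) / nu (ξ m i a)
            / ∑ j, mu (ξ m j a) / nu (ξ m j a))⌋ : ℝ) / (n m : ℝ)) * f (ξ m i a)
        - 1/α * L'| := by
      have := Set.mem_setOf_eq ▸ ha
      rw [Real.dist_eq, hLeq] at this
      exact this
    have hlt := aux_pointwise m (n m) hdet2 hdet3 α C Cf η τ ε₁ c ε L' Iη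
      hα hC1 hCf hη2 hτ1 hτ2 hτ3 hτ4 hIb hε₁b
      (fun i => mu (ξ m i a) / nu (ξ m i a)) (fun i => f (ξ m i a))
      (fun i => if ξ m i a ∈ B η then (1:ℝ) else 0)
      (fun i => div_nonneg (hmu_nonneg _) (hnu_nonneg _))
      (fun i => hgC (ξ m i a)) (fun i => hCfb (ξ m i a))
      (fun i => by by_cases hx : ξ m i a ∈ B η <;> simp [hx])
      (fun i hex => by
        have hx : ξ m i a ∈ B η := hex
        exact if_pos hx)
      hdet1 h1 h2 h3
    exact absurd ha' (not_le.mpr hlt)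
  refine le_trans (measure_mono hsub) ?_
  refine le_trans (measure_union_le _ _) ?_
  refine le_trans (add_le_add (hN₁ m hm1)
    (le_trans (measure_union_le _ _) (add_le_add (hN₂ m hm2) (hN₃ m hm3)))) ?_
  rw [← add_assoc]
  exact le_of_eq (ENNReal.add_thirds δ)
end

section
/- (Corollary 1.) Let X be a measurable space with σ-finite reference measure λ, ν and μ probability densities on X with g = μ/ν bounded from above, and assume μ( { x : α g(x) ∈ ℕ } ) = 0 for a fixed α ∈ (0,∞). For each m, let ξ^{m,1},…,ξ^{m,m} be X-valued random variables such that for every bounded measurable h, (1/m) Σ_{i=1}^m h(ξ^{m,i}) → ν(h) in probability, set ω^{m,i} = g(ξ^{m,i}) / Σ_{j=1}^m g(ξ^{m,j}), and let n = n(m) → ∞ with n/m → α. Then for every bounded measurable f : X → ℝ, n times the conditional variance of residual resampling, namely Σ_{i=1}^m ( ω^{m,i} − ⌊n ω^{m,i}⌋/n ) f(ξ^{m,i})² − ( Σ_{i=1}^m ( ω^{m,i} − ⌊n ω^{m,i}⌋/n ) f(ξ^{m,i}) )² / ( 1 − Σ_{i=1}^m ⌊n ω^{m,i}⌋/n ),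 converges in probability to κ(f) = ν{ ( μ/ν − (1/α)⌊α μ/ν⌋ ) f² } − ( ν{ ( μ/ν − (1/α)⌊α μ/ν⌋ ) f } )² / ( 1 − ν{ (1/α)⌊α μ/ν⌋ } ). -/
open MeasureTheory ProbabilityTheory Filter Finset

section helpers
variable {Ω : Type*} [MeasurableSpace Ω] {P : Measure Ω}

lemma ennreal_squeeze_zero {ι : Type*} {l : Filter ι} {f h : ι → ENNReal}
    (hle : ∀ m, f m ≤ h m) (hh : Tendsto h l (nhds 0)) : Tendsto f l (nhds 0) :=
  tendsto_of_tendsto_of_tendsto_of_le_of_le tendsto_const_nhds hh (fun _ => zero_le) hle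

lemma timc_congr' {F F' : ℕ → Ω → ℝ} {c : Ω → ℝ}
    (h : ∀ᶠ m in atTop, F m = F' m)
    (h' : TendstoInMeasure P F' atTop c) : TendstoInMeasure P F atTop c := by
  intro ε hε
  refine (h' ε hε).congr' ?_
  filter_upwards [h] with m hm
  rw [hm]

lemma timc_const {r : ℕ → ℝ} {c : ℝ} (h : Tendsto r atTop (nhds c)) :
    TendstoInMeasure P (fun m (_ : Ω) => r m) atTop (fun _ => c) := by
  rw [tendstoInMeasure_iff_dist]
  intro ε hε
  have hev : ∀ᶠ m in atTop, P {a : Ω | ε ≤ dist (r m) c} = 0 := by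
    filter_upwards [(Metric.tendsto_nhds.mp h) ε hε] with m hm
    have : {a : Ω | ε ≤ dist (r m) c} = ∅ := by
      ext a; simp only [Set.mem_setOf_eq, Set.mem_empty_iff_false, iff_false, not_le]; exact hm
    simp [this]
  exact Tendsto.congr' (by filter_upwards [hev] with m hm; rw [hm]) tendsto_const_nhds

lemma timc_comp2 {F G : ℕ → Ω → ℝ} {c d : ℝ}
    (hF : TendstoInMeasure P F atTop (fun _ => c))
    (hG : TendstoInMeasure P G atTop (fun _ => d))
    {φ : ℝ → ℝ → ℝ} (hφ : ContinuousAt (fun p : ℝ × ℝ => φ p.1 p.2) (c, d)) :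
    TendstoInMeasure P (fun m a => φ (F m a) (G m a)) atTop (fun _ => φ c d) := by
  rw [tendstoInMeasure_iff_dist] at hF hG ⊢
  intro ε hε
  rcases Metric.continuousAt_iff.mp hφ ε hε with ⟨δ, hδ, hball⟩
  have hsub : ∀ m, {a : Ω | ε ≤ dist (φ (F m a) (G m a)) (φ c d)} ⊆
      {a | δ ≤ dist (F m a) c} ∪ {a | δ ≤ dist (G m a) d} := by
    intro m a ha
    by_contra hcon
    simp only [Set.mem_union, Set.mem_setOf_eq, not_or, not_le] at hcon
    have hd : dist ((F m a, G m a) : ℝ × ℝ) (c, d) < δ := by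
      rw [Prod.dist_eq]
      exact max_lt hcon.1 hcon.2
    have := hball hd
    simp only [Set.mem_setOf_eq] at ha
    exact absurd this (not_lt.mpr ha)
  refine ennreal_squeeze_zero
    (fun m => le_trans (measure_mono (hsub m)) (measure_union_le _ _)) ?_
  have := Tendsto.add (hF δ hδ) (hG δ hδ)
  simpa using this

end helpers

section dct

open Set

lemma floor_param_tendsto {X : Type*} [MeasurableSpace X] (lam : Measure X)
    (g φ nu : X → ℝ) (hg : Measurable g) (hφ : Measurable φ) (hnu : Measurable nu)
    (hnu0 : ∀ x, 0 ≤ nu x) (hg0 : ∀ x, 0 ≤ g x)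
    (Cg Cφ : ℝ) (hCg : 0 ≤ Cg) (hgC : ∀ x, g x ≤ Cg) (hφC : ∀ x, |φ x| ≤ Cφ)
    (hint : Integrable nu lam) (α : ℝ) (hα : 0 < α)
    (hae : ∀ᵐ x ∂lam, 0 < g x → ¬∃ k : ℕ, α * g x = (k : ℝ)) :
    Tendsto (fun t => ∫ x, (⌊t * g x⌋ : ℝ) * φ x * nu x ∂lam)
      (nhdsWithin α (Ioo (α/2) (2*α)))
      (nhds (∫ x, (⌊α * g x⌋ : ℝ) * φ x * nu x ∂lam)) := by
  apply tendsto_integral_filter_of_dominated_convergence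
      (bound := fun x => (2*α*Cg) * Cφ * nu x)
  · refine Eventually.of_forall (fun t => ?_)
    exact (((measurable_from_top.comp ((hg.const_mul t).floor)).mul hφ).mul
      hnu).aestronglyMeasurable
  · filter_upwards [self_mem_nhdsWithin] with t ht
    refine Eventually.of_forall (fun x => ?_)
    have ht0 : 0 < t := lt_trans (by linarith) ht.1
    have hfl0 : (0:ℝ) ≤ (⌊t * g x⌋ : ℝ) := by
      have : (0:ℤ) ≤ ⌊t * g x⌋ := Int.floor_nonneg.mpr (mul_nonneg ht0.le (hg0 x))
      exact_mod_cast this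
    have hfl : (⌊t * g x⌋ : ℝ) ≤ 2*α*Cg := by
      calc (⌊t * g x⌋ : ℝ) ≤ t * g x := Int.floor_le _
        _ ≤ (2*α) * Cg := mul_le_mul (le_of_lt ht.2) (hgC x) (hg0 x) (by linarith)
    have hCφ : 0 ≤ Cφ := le_trans (abs_nonneg _) (hφC x)
    rw [Real.norm_eq_abs, abs_mul, abs_mul, abs_of_nonneg (hnu0 x), abs_of_nonneg hfl0]
    have h1 : (⌊t * g x⌋ : ℝ) * |φ x| ≤ (2*α*Cg) * Cφ :=
      mul_le_mul hfl (hφC x) (abs_nonneg _) (by positivity)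
    exact mul_le_mul_of_nonneg_right h1 (hnu0 x)
  · exact (hint.const_mul _)
  · filter_upwards [hae] with x hx
    rcases eq_or_lt_of_le (hg0 x) with hgx | hgx
    · have heq : ∀ t : ℝ, (⌊t * g x⌋ : ℝ) * φ x * nu x = (⌊α * g x⌋ : ℝ) * φ x * nu x := by
        intro t; rw [← hgx]; simp
      exact Tendsto.congr (fun t => (heq t).symm) tendsto_const_nhds
    · have hk := hx hgx
      have hlt : (⌊α * g x⌋ : ℝ) < α * g x := by
        rcases eq_or_lt_of_le (Int.floor_le (α * g x)) with h | h
        · exfalso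
          have h0 : (0:ℤ) ≤ ⌊α * g x⌋ := Int.floor_nonneg.mpr (by positivity)
          have hcast : ((⌊α * g x⌋.toNat : ℕ) : ℝ) = ((⌊α * g x⌋ : ℤ) : ℝ) := by
            exact_mod_cast Int.toNat_of_nonneg h0
          exact hk ⟨⌊α * g x⌋.toNat, by rw [hcast, h]⟩
        · exact h
      have hlt2 : α * g x < (⌊α * g x⌋ : ℝ) + 1 := Int.lt_floor_add_one _
      have hev : ∀ᶠ t in nhds α, (⌊α * g x⌋ : ℝ) < t * g x ∧ t * g x < (⌊α * g x⌋ : ℝ) + 1 := by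
        have hc : Tendsto (fun t : ℝ => t * g x) (nhds α) (nhds (α * g x)) :=
          (continuous_id.mul continuous_const).tendsto α
        exact (hc.eventually_const_lt hlt).and (hc.eventually_lt_const hlt2)
      have hev2 : ∀ᶠ t in nhdsWithin α (Ioo (α/2) (2*α)),
          (⌊α * g x⌋ : ℝ) * φ x * nu x = (⌊t * g x⌋ : ℝ) * φ x * nu x := by
        filter_upwards [nhdsWithin_le_nhds hev] with t ht
        have hfe : ⌊t * g x⌋ = ⌊α * g x⌋ := Int.floor_eq_iff.mpr ⟨ht.1.le, ht.2⟩
        rw [hfe]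
      exact Tendsto.congr' hev2 tendsto_const_nhds

lemma floor_param_approx {X : Type*} [MeasurableSpace X] (lam : Measure X)
    (g φ nu : X → ℝ) (hg : Measurable g) (hφ : Measurable φ) (hnu : Measurable nu)
    (hnu0 : ∀ x, 0 ≤ nu x) (hg0 : ∀ x, 0 ≤ g x)
    (Cg Cφ : ℝ) (hCg : 0 ≤ Cg) (hgC : ∀ x, g x ≤ Cg) (hφC : ∀ x, |φ x| ≤ Cφ)
    (hint : Integrable nu lam) (α : ℝ) (hα : 0 < α)
    (hae : ∀ᵐ x ∂lam, 0 < g x → ¬∃ k : ℕ, α * g x = (k : ℝ))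
    (ε : ℝ) (hε : 0 < ε) :
    ∃ δ : ℝ, 0 < δ ∧ δ < α ∧
      |(∫ x, (⌊(α+δ) * g x⌋ : ℝ) * φ x * nu x ∂lam) -
        ∫ x, (⌊α * g x⌋ : ℝ) * φ x * nu x ∂lam| < ε ∧
      |(∫ x, (⌊(α-δ) * g x⌋ : ℝ) * φ x * nu x ∂lam) -
        ∫ x, (⌊α * g x⌋ : ℝ) * φ x * nu x ∂lam| < ε := by
  have htd := floor_param_tendsto lam g φ nu hg hφ hnu hnu0 hg0 Cg Cφ hCg hgC hφC hint α hα hae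
  rcases (Metric.tendsto_nhdsWithin_nhds.mp htd) ε hε with ⟨η, hη, hball⟩
  refine ⟨min (η/2) (α/4), by positivity, lt_of_le_of_lt (min_le_right _ _) (by linarith), ?_, ?_⟩
  · have hmem : α + min (η/2) (α/4) ∈ Ioo (α/2) (2*α) := by
      constructor
      · have : (0:ℝ) < min (η/2) (α/4) := by positivity
        linarith
      · have : min (η/2) (α/4) ≤ α/4 := min_le_right _ _
        linarith
    have hdist : dist (α + min (η/2) (α/4)) α < η := by
      rw [Real.dist_eq]
      have h1 : min (η/2) (α/4) ≤ η/2 := min_le_left _ _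
      have h2 : (0:ℝ) < min (η/2) (α/4) := by positivity
      rw [abs_of_nonneg (by linarith)]
      linarith
    have := hball hmem hdist
    rwa [Real.dist_eq] at this
  · have hmem : α - min (η/2) (α/4) ∈ Ioo (α/2) (2*α) := by
      constructor
      · have : min (η/2) (α/4) ≤ α/4 := min_le_right _ _
        linarith
      · have : (0:ℝ) < min (η/2) (α/4) := by positivity
        linarith
    have hdist : dist (α - min (η/2) (α/4)) α < η := by
      rw [Real.dist_eq]
      have h1 : min (η/2) (α/4) ≤ η/2 := min_le_left _ _
      have h2 : (0:ℝ) < min (η/2) (α/4) := by positivity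
      rw [abs_of_nonpos (by linarith)]
      linarith
    have := hball hmem hdist
    rwa [Real.dist_eq] at this

end dct


/-- Corollary 1: limit of `n` times the conditional variance of residual
resampling.  Under the support condition `μ({x : α g(x) ∈ ℕ}) = 0` (with `g = μ/ν`
bounded) and `n/m → α`, the rescaled conditional variance converges in probability to
`κ(f) = ν{(μ/ν − (1/α)⌊α μ/ν⌋) f²} − (ν{(μ/ν − (1/α)⌊α μ/ν⌋) f})² / (1 − ν{(1/α)⌊α μ/ν⌋})`. -/
theorem residual_conditional_variance_limit
    {X : Type*} [MeasurableSpace X] (lam : Measure X) [SigmaFinite lam]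
    {Ω : Type*} [MeasurableSpace Ω] (P : Measure Ω) [IsProbabilityMeasure P]
    (nu mu : X → ℝ) (hnu_meas : Measurable nu) (hmu_meas : Measurable mu)
    (hnu_nonneg : ∀ x, 0 ≤ nu x) (hmu_nonneg : ∀ x, 0 ≤ mu x)
    (hnu_int : ∫ x, nu x ∂lam = 1) (hmu_int : ∫ x, mu x ∂lam = 1)
    (hg_bdd : ∃ C, ∀ x, mu x / nu x ≤ C)
    (ξ : (m : ℕ) → Fin m → Ω → X) (hξ : ∀ m i, Measurable (ξ m i))
    (hLLN : ∀ h : X → ℝ, Measurable h → (∃ C, ∀ x, |h x| ≤ C) →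
      TendstoInMeasure P (fun (m : ℕ) (a : Ω) => (1 / (m : ℝ)) * ∑ i, h (ξ m i a)) atTop
        (fun _ => ∫ x, h x * nu x ∂lam))
    (n : ℕ → ℕ) (hn : Tendsto n atTop atTop)
    (α : ℝ) (hα : 0 < α)
    (hnm : Tendsto (fun m : ℕ => (n m : ℝ) / m) atTop (nhds α))
    (hsupport : ∫ x in {x | ∃ k : ℕ, α * (mu x / nu x) = (k : ℝ)}, mu x ∂lam = 0)
    (f : X → ℝ) (hf : Measurable f) (hfb : ∃ C, ∀ x, |f x| ≤ C) :
    TendstoInMeasure P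
      (fun (m : ℕ) (a : Ω) =>
        (∑ i, (mu (ξ m i a) / nu (ξ m i a) / (∑ j, mu (ξ m j a) / nu (ξ m j a))
            - (⌊(n m : ℝ) * (mu (ξ m i a) / nu (ξ m i a)
                / ∑ j, mu (ξ m j a) / nu (ξ m j a))⌋ : ℝ) / (n m : ℝ)) * f (ξ m i a) ^ 2)
        - (∑ i, (mu (ξ m i a) / nu (ξ m i a) / (∑ j, mu (ξ m j a) / nu (ξ m j a))
            - (⌊(n m : ℝ) * (mu (ξ m i a) / nu (ξ m i a)
                / ∑ j, mu (ξ m j a) / nu (ξ m j a))⌋ : ℝ) / (n m : ℝ)) * f (ξ m i a)) ^ 2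
          / (1 - ∑ i, (⌊(n m : ℝ) * (mu (ξ m i a) / nu (ξ m i a)
                / ∑ j, mu (ξ m j a) / nu (ξ m j a))⌋ : ℝ) / (n m : ℝ))) atTop
      (fun _ =>
        (∫ x, (mu x / nu x - (1 / α) * (⌊α * (mu x / nu x)⌋ : ℝ)) * f x ^ 2 * nu x ∂lam)
        - (∫ x, (mu x / nu x - (1 / α) * (⌊α * (mu x / nu x)⌋ : ℝ)) * f x * nu x ∂lam) ^ 2
          / (1 - ∫ x, (1 / α) * (⌊α * (mu x / nu x)⌋ : ℝ) * nu x ∂lam)) := by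
  classical
  obtain ⟨C₀, hC₀⟩ := hg_bdd
  obtain ⟨Cf₀, hCf₀⟩ := hfb
  set g : X → ℝ := fun x => mu x / nu x with hg_def
  have hgx : ∀ y, mu y / nu y = g y := fun y => rfl
  have hgm : Measurable g := hmu_meas.div hnu_meas
  have hg0 : ∀ x, 0 ≤ g x := fun x => div_nonneg (hmu_nonneg x) (hnu_nonneg x)
  set Cg : ℝ := max C₀ 0 with hCg_def
  have hCg0 : 0 ≤ Cg := le_max_right _ _
  have hgC : ∀ x, g x ≤ Cg := fun x => le_trans (hC₀ x) (le_max_left _ _)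
  have hgabs : ∀ x, |g x| ≤ Cg := fun x => abs_le.mpr ⟨by linarith [hg0 x], hgC x⟩
  set Cf : ℝ := max Cf₀ 0 with hCf_def
  have hCf0 : 0 ≤ Cf := le_max_right _ _
  have hCf : ∀ x, |f x| ≤ Cf := fun x => le_trans (hCf₀ x) (le_max_left _ _)
  have hf_le : ∀ x, f x ≤ Cf := fun x => le_trans (le_abs_self _) (hCf x)
  have hf_ge : ∀ x, -Cf ≤ f x := fun x => neg_le_of_abs_le (hCf x)
  -- integrability
  have hnuInt : Integrable nu lam := by
    by_contra h; rw [integral_undef h] at hnu_int; exact one_ne_zero hnu_int.symm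
  have hmuInt : Integrable mu lam := by
    by_contra h; rw [integral_undef h] at hmu_int; exact one_ne_zero hmu_int.symm
  have hInt : ∀ (h : X → ℝ), Measurable h → ∀ C : ℝ, (∀ x, |h x| ≤ C) →
      Integrable (fun x => h x * nu x) lam := by
    intro h hh C hC
    refine Integrable.mono' (hnuInt.const_mul C) ((hh.mul hnu_meas).aestronglyMeasurable)
      (Eventually.of_forall fun x => ?_)
    rw [Real.norm_eq_abs, abs_mul, abs_of_nonneg (hnu_nonneg x)]
    exact mul_le_mul_of_nonneg_right (hC x) (hnu_nonneg x)
  -- the support condition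
  have hE'meas : MeasurableSet {x | ∃ k : ℕ, α * g x = (k:ℝ)} := by
    have hset : {x | ∃ k : ℕ, α * g x = (k:ℝ)} = ⋃ k : ℕ, (fun x => α * g x) ⁻¹' {(k:ℝ)} := by
      ext x; simp [Set.mem_iUnion]
    rw [hset]
    exact MeasurableSet.iUnion fun k => (hgm.const_mul α) (measurableSet_singleton _)
  have hmuE : ∀ᵐ x ∂lam, x ∈ {x | ∃ k : ℕ, α * g x = (k:ℝ)} → mu x = 0 := by
    have h0 : mu =ᵐ[lam.restrict {x | ∃ k : ℕ, α * g x = (k:ℝ)}] 0 := by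
      refine (integral_eq_zero_iff_of_nonneg_ae ?_ ?_).mp hsupport
      · exact Eventually.of_forall fun x => hmu_nonneg x
      · exact hmuInt.restrict
    exact (ae_restrict_iff' hE'meas).mp h0
  have hae_key : ∀ᵐ x ∂lam, 0 < g x → ¬∃ k : ℕ, α * g x = (k:ℝ) := by
    filter_upwards [hmuE] with x hx hgpos hk
    have hmu0 : mu x = 0 := hx hk
    have : g x = 0 := by rw [hg_def]; simp [hmu0]
    rw [this] at hgpos; exact lt_irrefl 0 hgpos
  have hnum : ∀ᵐ x ∂lam, nu x = 0 → mu x = 0 := by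
    filter_upwards [hmuE] with x hx hnux
    exact hx ⟨0, by simp [hg_def, hnux]⟩
  have hIg : ∫ x, g x * nu x ∂lam = 1 := by
    rw [← hmu_int]
    apply integral_congr_ae
    filter_upwards [hnum] with x hx
    rcases eq_or_ne (nu x) 0 with h | h
    · simp [hg_def, h, hx h]
    · exact div_mul_cancel₀ _ h
  -- LLN for the mean weight
  have hTg : TendstoInMeasure P (fun (m : ℕ) (a : Ω) => (1/(m:ℝ)) * ∑ j, g (ξ m j a)) atTop
      (fun _ => (1:ℝ)) := by
    have h := hLLN g hgm ⟨Cg, hgabs⟩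
    rwa [hIg] at h
  -- the random ratio converges to α
  have hB : TendstoInMeasure P
      (fun (m : ℕ) (a : Ω) => ((n m : ℝ)/(m:ℝ)) / ((1/(m:ℝ)) * ∑ j, g (ξ m j a))) atTop
      (fun _ => α) := by
    have h := timc_comp2 (P := P) (timc_const hnm) hTg
      (φ := fun u v => u / v) (ContinuousAt.div continuousAt_fst continuousAt_snd one_ne_zero)
    simpa using h
  -- core sandwich lemma
  have K0 : ∀ φ : X → ℝ, Measurable φ → (∀ x, 0 ≤ φ x) → ∀ Cφ : ℝ, (∀ x, φ x ≤ Cφ) →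
      TendstoInMeasure P
        (fun (m : ℕ) (a : Ω) => (1/(m:ℝ)) *
          ∑ i, (⌊(((n m : ℝ)/(m:ℝ)) / ((1/(m:ℝ)) * ∑ j, g (ξ m j a))) * g (ξ m i a)⌋ : ℝ)
            * φ (ξ m i a)) atTop
        (fun _ => ∫ x, (⌊α * g x⌋ : ℝ) * φ x * nu x ∂lam) := by
    intro φ hφm hφ0 Cφ hφC
    have hφabs : ∀ x, |φ x| ≤ Cφ := fun x => abs_le.mpr
      ⟨by linarith [hφ0 x, hφC x], hφC x⟩
    rw [tendstoInMeasure_iff_dist]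
    intro ε hε
    obtain ⟨δ, hδ0, hδα, hapP, hapM⟩ := floor_param_approx lam g φ nu hgm hφm hnu_meas
      hnu_nonneg hg0 Cg Cφ hCg0 hgC hφabs hnuInt α hα hae_key (ε/2) (by linarith)
    have hbd : ∀ t : ℝ, 0 ≤ t → t ≤ 2*α → ∀ x, |(⌊t * g x⌋ : ℝ) * φ x| ≤ (2*α*Cg)*Cφ := by
      intro t ht0 ht2 x
      have hfl0 : (0:ℝ) ≤ (⌊t * g x⌋ : ℝ) := by
        have : (0:ℤ) ≤ ⌊t * g x⌋ := Int.floor_nonneg.mpr (mul_nonneg ht0 (hg0 x))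
        exact_mod_cast this
      have hfl : (⌊t * g x⌋ : ℝ) ≤ 2*α*Cg := by
        calc (⌊t * g x⌋ : ℝ) ≤ t * g x := Int.floor_le _
          _ ≤ (2*α) * Cg := mul_le_mul ht2 (hgC x) (hg0 x) (by linarith)
      rw [abs_mul, abs_of_nonneg hfl0]
      exact mul_le_mul hfl (hφabs x) (abs_nonneg _) (by linarith)
    have hLp := hLLN (fun x => (⌊(α+δ) * g x⌋ : ℝ) * φ x)
      ((measurable_from_top.comp ((hgm.const_mul (α+δ)).floor)).mul hφm)
      ⟨(2*α*Cg)*Cφ, hbd (α+δ) (by linarith) (by linarith)⟩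
    have hLm := hLLN (fun x => (⌊(α-δ) * g x⌋ : ℝ) * φ x)
      ((measurable_from_top.comp ((hgm.const_mul (α-δ)).floor)).mul hφm)
      ⟨(2*α*Cg)*Cφ, hbd (α-δ) (by linarith) (by linarith)⟩
    set c := ∫ x, (⌊α * g x⌋ : ℝ) * φ x * nu x ∂lam with hc_def
    set Ip := ∫ x, (fun x => (⌊(α+δ) * g x⌋ : ℝ) * φ x) x * nu x ∂lam with hIp_def
    set Im := ∫ x, (fun x => (⌊(α-δ) * g x⌋ : ℝ) * φ x) x * nu x ∂lam with hIm_def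
    have hIp : |Ip - c| < ε/2 := hapP
    have hIm : |Im - c| < ε/2 := hapM
    have hsub : ∀ m : ℕ, {a : Ω | ε ≤ dist ((1/(m:ℝ)) *
          ∑ i, (⌊(((n m : ℝ)/(m:ℝ)) / ((1/(m:ℝ)) * ∑ j, g (ξ m j a))) * g (ξ m i a)⌋ : ℝ)
            * φ (ξ m i a)) c} ⊆
        {a : Ω | δ ≤ dist (((n m : ℝ)/(m:ℝ)) / ((1/(m:ℝ)) * ∑ j, g (ξ m j a))) α} ∪
        ({a : Ω | ε/2 ≤ dist ((1/(m:ℝ)) *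
            ∑ i, (fun x => (⌊(α-δ) * g x⌋ : ℝ) * φ x) (ξ m i a)) Im} ∪
         {a : Ω | ε/2 ≤ dist ((1/(m:ℝ)) *
            ∑ i, (fun x => (⌊(α+δ) * g x⌋ : ℝ) * φ x) (ξ m i a)) Ip}) := by
      intro m a ha
      simp only [Set.mem_setOf_eq] at ha
      by_contra hcon
      simp only [Set.mem_union, Set.mem_setOf_eq, not_or, not_le] at hcon
      obtain ⟨hB1, hB2, hB3⟩ := hcon
      set Bv := ((n m : ℝ)/(m:ℝ)) / ((1/(m:ℝ)) * ∑ j, g (ξ m j a)) with hBv_def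
      rw [Real.dist_eq] at hB1 hB2 hB3 ha
      have hBlo : α - δ ≤ Bv := by
        have := abs_lt.mp hB1; linarith [this.1]
      have hBhi : Bv ≤ α + δ := by
        have := abs_lt.mp hB1; linarith [this.2]
      have hle1 : (1/(m:ℝ)) * ∑ i, (fun x => (⌊(α-δ) * g x⌋ : ℝ) * φ x) (ξ m i a) ≤
          (1/(m:ℝ)) * ∑ i, (⌊Bv * g (ξ m i a)⌋ : ℝ) * φ (ξ m i a) := by
        apply mul_le_mul_of_nonneg_left _ (by positivity)
        apply Finset.sum_le_sum
        intro i _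
        apply mul_le_mul_of_nonneg_right _ (hφ0 _)
        have : ⌊(α-δ) * g (ξ m i a)⌋ ≤ ⌊Bv * g (ξ m i a)⌋ :=
          Int.floor_le_floor (mul_le_mul_of_nonneg_right hBlo (hg0 _))
        exact_mod_cast this
      have hle2 : (1/(m:ℝ)) * ∑ i, (⌊Bv * g (ξ m i a)⌋ : ℝ) * φ (ξ m i a) ≤
          (1/(m:ℝ)) * ∑ i, (fun x => (⌊(α+δ) * g x⌋ : ℝ) * φ x) (ξ m i a) := by
        apply mul_le_mul_of_nonneg_left _ (by positivity)
        apply Finset.sum_le_sum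
        intro i _
        apply mul_le_mul_of_nonneg_right _ (hφ0 _)
        have : ⌊Bv * g (ξ m i a)⌋ ≤ ⌊(α+δ) * g (ξ m i a)⌋ :=
          Int.floor_le_floor (mul_le_mul_of_nonneg_right hBhi (hg0 _))
        exact_mod_cast this
      have h2 := abs_lt.mp hB2
      have h3 := abs_lt.mp hB3
      have hip := abs_lt.mp hIp
      have him := abs_lt.mp hIm
      have : |(1/(m:ℝ)) * ∑ i, (⌊Bv * g (ξ m i a)⌋ : ℝ) * φ (ξ m i a) - c| < ε :=
        abs_lt.mpr ⟨by linarith, by linarith⟩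
      exact absurd ha (not_le.mpr this)
    have htend : Tendsto (fun m : ℕ =>
        P {a : Ω | δ ≤ dist (((n m : ℝ)/(m:ℝ)) / ((1/(m:ℝ)) * ∑ j, g (ξ m j a))) α} +
        (P {a : Ω | ε/2 ≤ dist ((1/(m:ℝ)) *
            ∑ i, (fun x => (⌊(α-δ) * g x⌋ : ℝ) * φ x) (ξ m i a)) Im} +
         P {a : Ω | ε/2 ≤ dist ((1/(m:ℝ)) *
            ∑ i, (fun x => (⌊(α+δ) * g x⌋ : ℝ) * φ x) (ξ m i a)) Ip})) atTop (nhds 0) := by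
      have h1 := (tendstoInMeasure_iff_dist.mp hB) δ hδ0
      have h2 := (tendstoInMeasure_iff_dist.mp hLm) (ε/2) (by linarith)
      have h3 := (tendstoInMeasure_iff_dist.mp hLp) (ε/2) (by linarith)
      have := h1.add (h2.add h3)
      simpa using this
    exact ennreal_squeeze_zero (fun m => le_trans (measure_mono (hsub m))
      (le_trans (measure_union_le _ _) (add_le_add_right (measure_union_le _ _) _))) htend
  -- floor at α : measurability, bounds, integrability
  have hfl_meas : Measurable (fun x => (⌊α * g x⌋ : ℝ)) :=
    measurable_from_top.comp (hgm.const_mul α).floor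
  have hfl_bd : ∀ x, |(⌊α * g x⌋ : ℝ)| ≤ α * Cg := by
    intro x
    have hfl0 : (0:ℝ) ≤ (⌊α * g x⌋ : ℝ) := by
      have : (0:ℤ) ≤ ⌊α * g x⌋ := Int.floor_nonneg.mpr (mul_nonneg hα.le (hg0 x))
      exact_mod_cast this
    rw [abs_of_nonneg hfl0]
    calc (⌊α * g x⌋ : ℝ) ≤ α * g x := Int.floor_le _
      _ ≤ α * Cg := mul_le_mul_of_nonneg_left (hgC x) hα.le
  have hIntFl : ∀ (φ : X → ℝ), Measurable φ → ∀ C : ℝ, (∀ x, |φ x| ≤ C) →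
      Integrable (fun x => (⌊α * g x⌋ : ℝ) * φ x * nu x) lam := by
    intro φ hφ C hC
    exact hInt (fun x => (⌊α * g x⌋ : ℝ) * φ x) (hfl_meas.mul hφ) ((α*Cg)*C)
      (fun x => by
        rw [abs_mul]
        exact mul_le_mul (hfl_bd x) (hC x) (abs_nonneg _) (by positivity))
  -- individual limits
  have hKsq := K0 (fun x => f x ^ 2) (hf.pow_const 2) (fun x => sq_nonneg _) (Cf^2)
    (fun x => by
      calc f x ^ 2 = |f x| ^ 2 := (sq_abs _).symm
        _ ≤ Cf ^ 2 := pow_le_pow_left₀ (abs_nonneg _) (hCf x) 2)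
  have hKone := K0 (fun _ => (1:ℝ)) measurable_const (fun _ => zero_le_one) 1 (fun _ => le_refl 1)
  have hKf : TendstoInMeasure P
      (fun (m : ℕ) (a : Ω) => (1/(m:ℝ)) *
        ∑ i, (⌊(((n m : ℝ)/(m:ℝ)) / ((1/(m:ℝ)) * ∑ j, g (ξ m j a))) * g (ξ m i a)⌋ : ℝ) * f (ξ m i a)) atTop
      (fun _ => ∫ x, (⌊α * g x⌋ : ℝ) * f x * nu x ∂lam) := by
    have h1 := K0 (fun x => f x + Cf) (hf.add measurable_const)
      (fun x => by show 0 ≤ f x + Cf; linarith [hf_ge x]) (2*Cf)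
      (fun x => by show f x + Cf ≤ 2*Cf; linarith [hf_le x])
    have h3 := timc_comp2 (P := P) h1 hKone (φ := fun u v => u - Cf * v)
      ((continuous_fst.sub (continuous_const.mul continuous_snd)).continuousAt)
    have hc : (∫ x, (⌊α * g x⌋ : ℝ) * (f x + Cf) * nu x ∂lam)
        - Cf * ∫ x, (⌊α * g x⌋ : ℝ) * 1 * nu x ∂lam
        = ∫ x, (⌊α * g x⌋ : ℝ) * f x * nu x ∂lam := by
      rw [← integral_const_mul, ← integral_sub
        (hIntFl (fun x => f x + Cf) (hf.add measurable_const) (2*Cf)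
          (fun x => by
            show |f x + Cf| ≤ 2*Cf
            exact abs_le.mpr ⟨by linarith [hf_ge x], by linarith [hf_le x]⟩))
        ((hIntFl (fun _ => (1:ℝ)) measurable_const 1 (fun _ => by norm_num)).const_mul Cf)]
      exact integral_congr_ae (Eventually.of_forall fun x => by ring)
    rw [hc] at h3
    refine timc_congr' (Eventually.of_forall fun m => funext fun a => ?_) h3
    simp only [mul_add, Finset.sum_add_distrib, mul_one]
    rw [← Finset.sum_mul]
    ring
  have hT1 := hLLN (fun x => g x * f x ^ 2) (hgm.mul (hf.pow_const 2))
    ⟨Cg * Cf^2, fun x => by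
      rw [abs_mul, abs_pow]
      exact mul_le_mul (hgabs x) (pow_le_pow_left₀ (abs_nonneg _) (hCf x) 2)
        (by positivity) hCg0⟩
  have hT2 := hLLN (fun x => g x * f x) (hgm.mul hf)
    ⟨Cg * Cf, fun x => by
      rw [abs_mul]
      exact mul_le_mul (hgabs x) (hCf x) (abs_nonneg _) hCg0⟩
  have hr : Tendsto (fun m : ℕ => (m:ℝ)/(n m : ℝ)) atTop (nhds α⁻¹) := by
    have heq : (fun m : ℕ => (m:ℝ)/(n m : ℝ)) = fun m : ℕ => ((n m : ℝ)/(m:ℝ))⁻¹ := by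
      funext m; rw [inv_div]
    rw [heq]
    exact hnm.inv₀ (ne_of_gt hα)
  -- positivity of the denominator
  have hJpos : 0 < α - ∫ x, (⌊α * g x⌋ : ℝ) * 1 * nu x ∂lam := by
    have hJint : Integrable (fun x => (α * g x - (⌊α * g x⌋ : ℝ)) * nu x) lam := by
      refine hInt (fun x => α * g x - (⌊α * g x⌋ : ℝ)) ((hgm.const_mul α).sub hfl_meas) 1
        (fun x => abs_le.mpr ⟨?_, ?_⟩)
      · show -1 ≤ α * g x - (⌊α * g x⌋ : ℝ)
        have := Int.floor_le (α * g x); linarith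
      · show α * g x - (⌊α * g x⌋ : ℝ) ≤ 1
        have := Int.lt_floor_add_one (α * g x); linarith
    have hJnn : 0 ≤ ∫ x, (α * g x - (⌊α * g x⌋ : ℝ)) * nu x ∂lam :=
      integral_nonneg fun x => mul_nonneg (by linarith [Int.floor_le (α * g x)]) (hnu_nonneg x)
    have hJne : ∫ x, (α * g x - (⌊α * g x⌋ : ℝ)) * nu x ∂lam ≠ 0 := by
      intro h0
      have hz : (fun x => (α * g x - (⌊α * g x⌋ : ℝ)) * nu x) =ᵐ[lam] 0 :=
        (integral_eq_zero_iff_of_nonneg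
          (fun x => mul_nonneg (by linarith [Int.floor_le (α * g x)]) (hnu_nonneg x))
          hJint).mp h0
      have hgz : (fun x => g x * nu x) =ᵐ[lam] 0 := by
        filter_upwards [hz, hae_key] with x hx hkey
        rcases eq_or_ne (nu x) 0 with hnux | hnux
        · simp [hnux]
        · rcases eq_or_lt_of_le (hg0 x) with hgx0 | hgx0
          · simp [← hgx0]
          · exfalso
            have hfx : α * g x - (⌊α * g x⌋ : ℝ) = 0 := by
              rcases mul_eq_zero.mp hx with h | h
              · exact h
              · exact absurd h hnux
            have h0le : (0:ℤ) ≤ ⌊α * g x⌋ := Int.floor_nonneg.mpr (by positivity)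
            have hcast : ((⌊α * g x⌋.toNat : ℕ) : ℝ) = ((⌊α * g x⌋ : ℤ) : ℝ) := by
              exact_mod_cast Int.toNat_of_nonneg h0le
            exact hkey hgx0 ⟨⌊α * g x⌋.toNat, by rw [hcast]; linarith⟩
      have h00 := integral_congr_ae hgz
      simp [hIg] at h00
    have hJ : 0 < ∫ x, (α * g x - (⌊α * g x⌋ : ℝ)) * nu x ∂lam :=
      lt_of_le_of_ne hJnn (Ne.symm hJne)
    have hsplit : ∫ x, (α * g x - (⌊α * g x⌋ : ℝ)) * nu x ∂lam
        = α - ∫ x, (⌊α * g x⌋ : ℝ) * 1 * nu x ∂lam := by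
      have heq2 : ∀ x, (α * g x - (⌊α * g x⌋ : ℝ)) * nu x
          = α * (g x * nu x) - (⌊α * g x⌋ : ℝ) * 1 * nu x := fun x => by ring
      rw [integral_congr_ae (Eventually.of_forall heq2), integral_sub
        ((hInt g hgm Cg hgabs).const_mul α)
        (hIntFl (fun _ => (1:ℝ)) measurable_const 1 (fun _ => by norm_num)),
        integral_const_mul, hIg, mul_one]
    linarith [hsplit ▸ hJ]
  have hD : (1:ℝ) - α⁻¹ * ∫ x, (⌊α * g x⌋ : ℝ) * 1 * nu x ∂lam ≠ 0 := by
    have h1 : α⁻¹ * ∫ x, (⌊α * g x⌋ : ℝ) * 1 * nu x ∂lam < 1 := by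
      have h2 := mul_lt_mul_of_pos_left (by linarith [hJpos] :
        (∫ x, (⌊α * g x⌋ : ℝ) * 1 * nu x ∂lam) < α) (inv_pos.mpr hα)
      rwa [inv_mul_cancel₀ (ne_of_gt hα)] at h2
    intro h
    linarith [h]
  -- assemble the limit of the clean expression
  have S1 := timc_comp2 (P := P) hT1 hTg (φ := fun u v => u / v)
    (ContinuousAt.div continuousAt_fst continuousAt_snd one_ne_zero)
  have S2 := timc_comp2 (P := P) (timc_const hr) hKsq (φ := fun u v => u * v)
    ((continuous_fst.mul continuous_snd).continuousAt)
  have S3 := timc_comp2 (P := P) S1 S2 (φ := fun u v => u - v)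
    ((continuous_fst.sub continuous_snd).continuousAt)
  have S4 := timc_comp2 (P := P) hT2 hTg (φ := fun u v => u / v)
    (ContinuousAt.div continuousAt_fst continuousAt_snd one_ne_zero)
  have S5 := timc_comp2 (P := P) (timc_const hr) hKf (φ := fun u v => u * v)
    ((continuous_fst.mul continuous_snd).continuousAt)
  have S6 := timc_comp2 (P := P) S4 S5 (φ := fun u v => u - v)
    ((continuous_fst.sub continuous_snd).continuousAt)
  have S7 := timc_comp2 (P := P) S6 S6 (φ := fun u v => u ^ 2)
    ((continuous_fst.pow 2).continuousAt)
  have S8 := timc_comp2 (P := P) (timc_const hr) hKone (φ := fun u v => u * v)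
    ((continuous_fst.mul continuous_snd).continuousAt)
  have S9 := timc_comp2 (P := P)
    (timc_const (tendsto_const_nhds : Tendsto (fun _ : ℕ => (1:ℝ)) atTop (nhds 1))) S8
    (φ := fun u v => u - v) ((continuous_fst.sub continuous_snd).continuousAt)
  have S10 := timc_comp2 (P := P) S7 S9 (φ := fun u v => u / v)
    (ContinuousAt.div continuousAt_fst continuousAt_snd hD)
  have S11 := timc_comp2 (P := P) S3 S10 (φ := fun u v => u - v)
    ((continuous_fst.sub continuous_snd).continuousAt)
  have hMain : TendstoInMeasure P
      (fun (m : ℕ) (a : Ω) =>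
        (((1/(m:ℝ)) * ∑ i, g (ξ m i a) * f (ξ m i a) ^ 2) / ((1/(m:ℝ)) * ∑ j, g (ξ m j a))
          - ((m:ℝ)/(n m : ℝ)) * ((1/(m:ℝ)) * ∑ i, (⌊(((n m : ℝ)/(m:ℝ)) / ((1/(m:ℝ)) * ∑ j, g (ξ m j a))) * g (ξ m i a)⌋ : ℝ) * f (ξ m i a) ^ 2))
        - (((1/(m:ℝ)) * ∑ i, g (ξ m i a) * f (ξ m i a)) / ((1/(m:ℝ)) * ∑ j, g (ξ m j a))
          - ((m:ℝ)/(n m : ℝ)) * ((1/(m:ℝ)) * ∑ i, (⌊(((n m : ℝ)/(m:ℝ)) / ((1/(m:ℝ)) * ∑ j, g (ξ m j a))) * g (ξ m i a)⌋ : ℝ) * f (ξ m i a))) ^ 2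
          / (1 - ((m:ℝ)/(n m : ℝ)) * ((1/(m:ℝ)) * ∑ i, (⌊(((n m : ℝ)/(m:ℝ)) / ((1/(m:ℝ)) * ∑ j, g (ξ m j a))) * g (ξ m i a)⌋ : ℝ) * 1)))
      atTop
      (fun _ =>
        ((∫ x, g x * f x ^ 2 * nu x ∂lam) / 1
          - α⁻¹ * ∫ x, (⌊α * g x⌋ : ℝ) * f x ^ 2 * nu x ∂lam)
        - ((∫ x, g x * f x * nu x ∂lam) / 1
          - α⁻¹ * ∫ x, (⌊α * g x⌋ : ℝ) * f x * nu x ∂lam) ^ 2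
          / (1 - α⁻¹ * ∫ x, (⌊α * g x⌋ : ℝ) * 1 * nu x ∂lam)) := S11
  -- rewrite the stated constants
  have hc1 : ∫ x, (mu x / nu x - (1 / α) * (⌊α * (mu x / nu x)⌋ : ℝ)) * f x ^ 2 * nu x ∂lam
      = (∫ x, g x * f x ^ 2 * nu x ∂lam) / 1
        - α⁻¹ * ∫ x, (⌊α * g x⌋ : ℝ) * f x ^ 2 * nu x ∂lam := by
    rw [div_one]
    have heqx : ∀ x, (mu x / nu x - (1 / α) * (⌊α * (mu x / nu x)⌋ : ℝ)) * f x ^ 2 * nu x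
        = g x * f x ^ 2 * nu x - α⁻¹ * ((⌊α * g x⌋ : ℝ) * f x ^ 2 * nu x) := by
      intro x; simp only [hgx]; ring
    rw [integral_congr_ae (Eventually.of_forall heqx), integral_sub
      (hInt (fun x => g x * f x ^ 2) (hgm.mul (hf.pow_const 2)) (Cg * Cf^2)
        (fun x => by
          rw [abs_mul, abs_pow]
          exact mul_le_mul (hgabs x) (pow_le_pow_left₀ (abs_nonneg _) (hCf x) 2)
            (by positivity) hCg0))
      ((hIntFl (fun x => f x ^ 2) (hf.pow_const 2) (Cf^2)
        (fun x => by
          rw [abs_pow]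
          exact pow_le_pow_left₀ (abs_nonneg _) (hCf x) 2)).const_mul α⁻¹),
      integral_const_mul]
  have hc2 : ∫ x, (mu x / nu x - (1 / α) * (⌊α * (mu x / nu x)⌋ : ℝ)) * f x * nu x ∂lam
      = (∫ x, g x * f x * nu x ∂lam) / 1
        - α⁻¹ * ∫ x, (⌊α * g x⌋ : ℝ) * f x * nu x ∂lam := by
    rw [div_one]
    have heqx : ∀ x, (mu x / nu x - (1 / α) * (⌊α * (mu x / nu x)⌋ : ℝ)) * f x * nu x
        = g x * f x * nu x - α⁻¹ * ((⌊α * g x⌋ : ℝ) * f x * nu x) := by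
      intro x; simp only [hgx]; ring
    rw [integral_congr_ae (Eventually.of_forall heqx), integral_sub
      (hInt (fun x => g x * f x) (hgm.mul hf) (Cg * Cf)
        (fun x => by
          rw [abs_mul]
          exact mul_le_mul (hgabs x) (hCf x) (abs_nonneg _) hCg0))
      ((hIntFl f hf Cf hCf).const_mul α⁻¹), integral_const_mul]
  have hc3 : ∫ x, (1 / α) * (⌊α * (mu x / nu x)⌋ : ℝ) * nu x ∂lam
      = α⁻¹ * ∫ x, (⌊α * g x⌋ : ℝ) * 1 * nu x ∂lam := by
    have heqx : ∀ x, (1 / α) * (⌊α * (mu x / nu x)⌋ : ℝ) * nu x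
        = α⁻¹ * ((⌊α * g x⌋ : ℝ) * 1 * nu x) := by
      intro x; simp only [hgx]; ring
    rw [integral_congr_ae (Eventually.of_forall heqx), integral_const_mul]
  rw [hc1, hc2, hc3]
  refine timc_congr' ?_ hMain
  filter_upwards [eventually_ge_atTop 1] with m hm
  funext a
  have hm' : ((m:ℕ):ℝ) ≠ 0 := Nat.cast_ne_zero.mpr (by omega)
  simp only [hgx]
  set S := ∑ j, g (ξ m j a) with hS_def
  have hargs : ∀ i : Fin m, (n m : ℝ) * (g (ξ m i a) / S)
      = (((n m : ℝ)/(m:ℝ)) / ((1/(m:ℝ)) * S)) * g (ξ m i a) := by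
    intro i
    rcases eq_or_ne S 0 with hS | hS
    · have hz : g (ξ m i a) = 0 := by
        have hS0 : ∑ j, g (ξ m j a) = 0 := by rw [← hS_def]; exact hS
        exact (Finset.sum_eq_zero_iff_of_nonneg
          (fun j _ => hg0 (ξ m j a))).mp hS0 i (Finset.mem_univ i)
      rw [hz]; simp
    · have hBeq : (((n m : ℝ)/(m:ℝ)) / ((1/(m:ℝ)) * S)) = (n m : ℝ)/S := by
        field_simp
      rw [hBeq, div_mul_eq_mul_div, mul_div_assoc]
  have key1 : ∀ φ : Fin m → ℝ, ∑ i, g (ξ m i a) / S * φ i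
      = ((1/(m:ℝ)) * ∑ i, g (ξ m i a) * φ i) / ((1/(m:ℝ)) * S) := by
    intro φ
    rw [mul_div_mul_left _ _ (one_div_ne_zero hm'), Finset.sum_div]
    exact Finset.sum_congr rfl (fun i _ => div_mul_eq_mul_div _ _ _)
  have key2 : ∀ φ : Fin m → ℝ, ∑ i, (⌊(n m : ℝ) * (g (ξ m i a) / S)⌋ : ℝ) / (n m : ℝ) * φ i
      = ((m:ℝ)/(n m : ℝ)) * ((1/(m:ℝ)) * ∑ i, (⌊(((n m : ℝ)/(m:ℝ)) / ((1/(m:ℝ)) * S)) * g (ξ m i a)⌋ : ℝ) * φ i) := by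
    intro φ
    have hdd : ∀ x : ℝ, ((m:ℝ)/(n m : ℝ)) * ((1/(m:ℝ)) * x) = x / (n m : ℝ) := by
      intro x
      rcases eq_or_ne ((n m : ℝ)) 0 with h | h
      · rw [h]; simp
      · field_simp
    rw [hdd, Finset.sum_div]
    refine Finset.sum_congr rfl (fun i _ => ?_)
    rw [hargs i, div_mul_eq_mul_div]
  simp only [sub_mul, Finset.sum_sub_distrib]
  rw [key1 (fun i => f (ξ m i a) ^ 2), key1 (fun i => f (ξ m i a)),
    key2 (fun i => f (ξ m i a) ^ 2), key2 (fun i => f (ξ m i a))]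
  have h3 : ∑ i : Fin m, (⌊(n m : ℝ) * (g (ξ m i a) / S)⌋ : ℝ) / (n m : ℝ)
      = ∑ i : Fin m, (⌊(n m : ℝ) * (g (ξ m i a) / S)⌋ : ℝ) / (n m : ℝ) * 1 := by
    simp
  rw [h3, key2 (fun _ => 1)]
end
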